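/- arXiv:1305.5395 — 7 statements merged into one kernel-verified Lean document; each statement's English description precedes it below -/
import Mathlib

section
/- Let a, b be nonzero complex numbers whose arguments (taken in [0, π)) satisfy arg a < arg(a+b). Then arg(a+b) < arg b (where a + b is nonzero). -/
lemma im_conj_mul_aux (z w : ℂ) (hz : z ≠ 0) (hw : w ≠ 0) :
    ((starRingEnd ℂ) z * w).im =
      ‖z‖ * ‖w‖ * Real.sin (w.arg - z.arg) := by
  have hz' : ‖z‖ ≠ 0 := by simpa using hz
  have hw' : ‖w‖ ≠ 0 := by simpa using hw
  rw [Real.sin_sub, Complex.sin_arg, Complex.sin_arg, Complex.cos_arg hz, Complex.cos_arg hw]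
  field_simp
  rw [Complex.mul_im, Complex.conj_re, Complex.conj_im]
  ring

/-- Strict seesaw property: if `a, b` are nonzero complex numbers with arguments in
`[0, π)` and `arg a < arg (a + b)`, then `a + b` is nonzero and `arg (a + b) < arg b`. -/
theorem stmt_2 (a b : ℂ) (ha : a ≠ 0) (hb : b ≠ 0)
    (ha0 : 0 ≤ a.arg) (ha1 : a.arg < Real.pi)
    (hb0 : 0 ≤ b.arg) (hb1 : b.arg < Real.pi)
    (h : a.arg < (a + b).arg) :
    a + b ≠ 0 ∧ (a + b).arg < b.arg := by
  have hs : a + b ≠ 0 := by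
    intro h0
    rw [h0, Complex.arg_zero] at h
    linarith
  refine ⟨hs, ?_⟩
  have hsle : (a + b).arg ≤ Real.pi := Complex.arg_le_pi _
  have h1 := im_conj_mul_aux a (a + b) ha hs
  have h2 := im_conj_mul_aux a b ha hb
  have h3 := im_conj_mul_aux (a + b) b hs hb
  have haa : ((starRingEnd ℂ) a * a).im = 0 := by
    simp [Complex.mul_im]; ring
  have hbb : ((starRingEnd ℂ) b * b).im = 0 := by
    simp [Complex.mul_im]; ring
  have heq1 : ((starRingEnd ℂ) a * (a + b)).im = ((starRingEnd ℂ) a * b).im := by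
    rw [mul_add, Complex.add_im, haa, zero_add]
  have heq2 : ((starRingEnd ℂ) (a + b) * b).im = ((starRingEnd ℂ) a * b).im := by
    rw [map_add, add_mul, Complex.add_im, hbb, add_zero]
  have habs : (0:ℝ) < ‖a‖ := norm_pos_iff.mpr ha
  have hbabs : (0:ℝ) < ‖b‖ := norm_pos_iff.mpr hb
  have hsabs : (0:ℝ) < ‖a + b‖ := norm_pos_iff.mpr hs
  have hK : 0 < ((starRingEnd ℂ) a * b).im := by
    by_cases hc : (a + b).arg - a.arg < Real.pi
    · rw [← heq1, h1]
      exact mul_pos (mul_pos habs hsabs)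
        (Real.sin_pos_of_pos_of_lt_pi (by linarith) hc)
    · push_neg at hc
      have haz : a.arg = 0 := by linarith
      have hsz : (a + b).arg = Real.pi := by linarith
      exfalso
      have hK0 : ((starRingEnd ℂ) a * b).im = 0 := by
        rw [← heq1, h1, haz, hsz, sub_zero, Real.sin_pi, mul_zero]
      have hsinb : Real.sin b.arg = 0 := by
        rw [h2, haz, sub_zero] at hK0
        exact (mul_eq_zero.mp hK0).resolve_left
          (mul_ne_zero (ne_of_gt habs) (ne_of_gt hbabs))
      have hbz : b.arg = 0 := by
        by_contra hne
        have : 0 < b.arg := lt_of_le_of_ne hb0 (Ne.symm hne)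
        exact absurd hsinb (ne_of_gt (Real.sin_pos_of_pos_of_lt_pi this hb1))
      rw [Complex.arg_eq_zero_iff] at haz hbz
      have hare : 0 < a.re :=
        lt_of_le_of_ne haz.1 fun h' => ha (Complex.ext h'.symm haz.2)
      have hbre : 0 < b.re :=
        lt_of_le_of_ne hbz.1 fun h' => hb (Complex.ext h'.symm hbz.2)
      rw [Complex.arg_eq_pi_iff] at hsz
      have : (a + b).re = a.re + b.re := Complex.add_re a b
      linarith [hsz.1]
  -- now conclude
  by_cases hsneg : (a + b).arg < 0
  · linarith
  · push_neg at hsneg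
    by_contra hle
    push_neg at hle
    have hsin : Real.sin (b.arg - (a + b).arg) ≤ 0 :=
      Real.sin_nonpos_of_nonpos_of_neg_pi_le (by linarith) (by linarith)
    rw [← heq2, h3] at hK
    nlinarith [mul_pos hsabs hbabs]
end

section
/- Fix n ≥ 1 and complex numbers z₁, …, zₙ, all nonzero with arguments in [0, π), and let γ = arg(z₁ + ⋯ + zₙ) (assume the sum is nonzero). For each residue i ∈ ℤ/n, define C_i ⊆ ℤ/n as follows: C_i = {i, i−1, …, i−t_i} where t_i ≥ 0 is the maximal integer ≤ n−1 such that arg(z_i + z_{i−1} + ⋯ + z_{i−v}) ≥ γ for all 0 ≤ v ≤ t_i (indices mod n), and C_i = ∅ if arg(z_i) < γ. Then for any i, j with C_i ∩ C_j ≠ ∅, either C_i ⊆ C_j or C_j ⊆ C_i. -/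
open Complex

/-- Membership in the cone: upper half plane, with positive reals on the boundary. -/
def InCone (w : ℂ) : Prop := 0 ≤ w.im ∧ (w.im = 0 → 0 < w.re)

lemma inCone_ne_zero {w : ℂ} (h : InCone w) : w ≠ 0 := by
  intro h0; rcases h with ⟨h1, h2⟩
  rw [h0] at h2
  simp at h2

lemma inCone_arg_nonneg {w : ℂ} (h : InCone w) : 0 ≤ w.arg :=
  Complex.arg_nonneg_iff.mpr h.1

lemma inCone_arg_lt_pi {w : ℂ} (h : InCone w) : w.arg < Real.pi := by
  rcases lt_or_eq_of_le (Complex.arg_le_pi w) with h' | h'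
  · exact h'
  · exfalso
    obtain ⟨hre, him⟩ := Complex.arg_eq_pi_iff.mp h'
    exact absurd (h.2 him) (by linarith)

lemma inCone_add {a b : ℂ} (ha : InCone a) (hb : InCone b) : InCone (a + b) := by
  refine ⟨by simp [Complex.add_im]; linarith [ha.1, hb.1], fun h => ?_⟩
  simp only [Complex.add_im] at h
  have h1 : a.im = 0 := by linarith [ha.1, hb.1]
  have h2 : b.im = 0 := by linarith [ha.1, hb.1]
  simp only [Complex.add_re]
  linarith [ha.2 h1, hb.2 h2]

lemma inCone_sum {ι : Type*} {s : Finset ι} (hs : s.Nonempty) (f : ι → ℂ)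
    (h : ∀ i ∈ s, InCone (f i)) : InCone (∑ i ∈ s, f i) := by
  induction hs using Finset.Nonempty.cons_induction with
  | singleton i => simpa using h i (by simp)
  | cons i s hi hs ih =>
      rw [Finset.sum_cons]
      exact inCone_add (h i (by simp)) (ih fun j hj => h j (by simp [hj]))

lemma im_rotate (w : ℂ) (γ : ℝ) :
    (w * Complex.exp (-(γ : ℂ) * I)).im = ‖w‖ * Real.sin (w.arg - γ) := by
  conv_lhs => rw [← Complex.norm_mul_exp_arg_mul_I w]
  rw [mul_assoc, ← Complex.exp_add]
  have : (w.arg : ℂ) * I + -(γ : ℂ) * I = ((w.arg - γ : ℝ) : ℂ) * I := by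
    push_cast; ring
  rw [this]
  rw [show ((‖w‖ : ℂ) * Complex.exp (((w.arg - γ : ℝ) : ℂ) * I)).im
      = ‖w‖ * (Complex.exp (((w.arg - γ : ℝ) : ℂ) * I)).im by
    simp [Complex.mul_im]]
  rw [Complex.exp_ofReal_mul_I_im]

lemma arg_ge_iff {w : ℂ} {γ : ℝ} (hγ0 : 0 ≤ γ) (hγπ : γ < Real.pi) (hw : InCone w) :
    γ ≤ w.arg ↔ 0 ≤ (w * Complex.exp (-(γ : ℂ) * I)).im := by
  rw [im_rotate]
  have habs : 0 < ‖w‖ := by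
    simpa [norm_pos_iff] using inCone_ne_zero hw
  constructor
  · intro h
    have : 0 ≤ Real.sin (w.arg - γ) :=
      Real.sin_nonneg_of_nonneg_of_le_pi (by linarith) (by linarith [inCone_arg_lt_pi hw])
    positivity
  · intro h
    by_contra hlt
    push_neg at hlt
    have h1 : Real.sin (w.arg - γ) < 0 :=
      Real.sin_neg_of_neg_of_neg_pi_lt (by linarith) (by linarith [inCone_arg_nonneg hw])
    nlinarith

lemma arg_add_ge {a b : ℂ} {γ : ℝ} (hγ0 : 0 ≤ γ) (hγπ : γ < Real.pi)
    (ha : InCone a) (hb : InCone b) (hga : γ ≤ a.arg) (hgb : γ ≤ b.arg) :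
    γ ≤ (a + b).arg := by
  rw [arg_ge_iff hγ0 hγπ (inCone_add ha hb)]
  rw [add_mul]
  rw [Complex.add_im]
  have h1 := (arg_ge_iff hγ0 hγπ ha).mp hga
  have h2 := (arg_ge_iff hγ0 hγπ hb).mp hgb
  linarith

/-- Interval-nesting lemma for a discrete stability function on the cyclic quiver:
let `z : ZMod n → ℂ` be nonzero with arguments in `[0, π)`, `γ` the argument of the
total sum (assumed nonzero), and for each `i` let `C i` be the descending arc
`{i, i−1, …, i−tᵢ}` consisting of those `i − v` (`0 ≤ v ≤ n−1`) such that every backward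
partial sum `z i + z (i−1) + ⋯ + z (i−u)` with `u ≤ v` has argument `≥ γ` (so `C i = ∅`
when `arg (z i) < γ`).  Then any two such arcs that meet are nested. -/
theorem stmt_4 (n : ℕ) [NeZero n] (hn : 1 ≤ n)
    (z : ZMod n → ℂ)
    (hz : ∀ i, z i ≠ 0 ∧ 0 ≤ (z i).arg ∧ (z i).arg < Real.pi)
    (hsum : (∑ i : ZMod n, z i) ≠ 0)
    (γ : ℝ) (hγ : γ = (∑ i : ZMod n, z i).arg)
    (S : ZMod n → ℕ → ℂ)
    (hS : ∀ i v, S i v = ∑ u ∈ Finset.range (v + 1), z (i - (u : ZMod n)))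
    (C : ZMod n → Set (ZMod n))
    (hC : ∀ i, C i = {j | ∃ v : ℕ, v ≤ n - 1 ∧ j = i - (v : ZMod n) ∧
      ∀ u ≤ v, γ ≤ (S i u).arg}) :
    ∀ i j : ZMod n, (C i ∩ C j).Nonempty → C i ⊆ C j ∨ C j ⊆ C i := by
  have hK : ∀ i : ZMod n, InCone (z i) := by
    intro i
    obtain ⟨h0, h1, h2⟩ := hz i
    refine ⟨Complex.arg_nonneg_iff.mp h1, fun him => ?_⟩
    rcases lt_trichotomy (z i).re 0 with h | h | h
    · exact absurd (Complex.arg_eq_pi_iff.mpr ⟨h, him⟩) (ne_of_lt h2)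
    · exact absurd (Complex.ext h (by simpa using him)) h0
    · exact h
  have hKS : ∀ (i : ZMod n) (v : ℕ), InCone (S i v) := by
    intro i v
    rw [hS]
    exact inCone_sum (Finset.nonempty_range_add_one) _ (fun u _ => hK _)
  have hKtot : InCone (∑ i : ZMod n, z i) :=
    inCone_sum (Finset.univ_nonempty) _ (fun i _ => hK i)
  have hγ0 : 0 ≤ γ := hγ ▸ inCone_arg_nonneg hKtot
  have hγπ : γ < Real.pi := hγ ▸ inCone_arg_lt_pi hKtot
  -- key asymmetric lemma
  have key : ∀ (i j : ZMod n) (a b : ℕ), a ≤ b → b ≤ n - 1 →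
      i - (a : ZMod n) = j - (b : ZMod n) →
      (∀ u ≤ b, γ ≤ (S j u).arg) → C i ⊆ C j := by
    intro i j a b hab hb heq hB x hx
    rw [hC] at hx ⊢
    obtain ⟨c, hc, hxc, hXc⟩ := hx
    set d := b - a with hd
    have hij : i = j - ((d : ℕ) : ZMod n) := by
      rw [hd, Nat.cast_sub hab]
      linear_combination heq
    have hall : ∀ u ≤ d + c, γ ≤ (S j u).arg := by
      intro u hu
      by_cases hud : u ≤ d
      · exact hB u (le_trans hud (by omega))
      · push_neg at hud
        by_cases hd0 : d = 0
        · have hij0 : i = j := by rw [hij, hd0]; simp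
          rw [← hij0]
          exact hXc u (by omega)
        obtain ⟨m, hm⟩ : ∃ m, d = m + 1 := ⟨d - 1, by omega⟩
        set u' := u - d with hu'
        have hu'c : u' ≤ c := by omega
        have hsplit : S j u = S j m + S i u' := by
          rw [hS, hS, hS]
          have h1 : u + 1 = (m + 1) + (u' + 1) := by omega
          rw [h1, Finset.sum_range_add]
          congr 1
          refine Finset.sum_congr rfl (fun w _ => ?_)
          congr 1
          rw [hij, hm]
          push_cast
          ring
        rw [hsplit]
        exact arg_add_ge hγ0 hγπ (hKS j m) (hKS i u')
          (hB m (by omega)) (hXc u' hu'c)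
    by_cases hle : d + c ≤ n - 1
    · refine ⟨d + c, hle, ?_, fun u hu => hall u hu⟩
      rw [hxc, hij]
      push_cast
      ring
    · refine ⟨d + c - n, by omega, ?_, fun u hu => hall u (by omega)⟩
      have h2 : d + c = (d + c - n) + n := by omega
      have hcast : ((d + c : ℕ) : ZMod n) = ((d + c - n : ℕ) : ZMod n) := by
        conv_lhs => rw [h2]
        push_cast [ZMod.natCast_self]
        ring
      rw [hxc, hij, ← hcast]
      push_cast
      ring
  intro i j ⟨k, hki, hkj⟩
  rw [hC] at hki hkj
  obtain ⟨a, ha, hka, hAa⟩ := hki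
  obtain ⟨b, hb, hkb, hBb⟩ := hkj
  have heq : i - (a : ZMod n) = j - (b : ZMod n) := by rw [← hka, ← hkb]
  rcases le_total a b with hab | hab
  · exact Or.inl (key i j a b hab hb heq hBb)
  · exact Or.inr (key j i b a hab ha heq.symm hAa)
end

section
/- Fix n ≥ 2 and nonzero complex numbers z₁, …, zₙ with arguments in [0, π), and let γ = arg(z₁ + ⋯ + zₙ) (sum assumed nonzero). Then there exists a residue i₀ ∈ ℤ/n such that for every 0 ≤ v ≤ n−1, the partial sum z_{i₀} + z_{i₀−1} + ⋯ + z_{i₀−v} (indices mod n) is nonzero with argument ≥ γ. -/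
open Complex Finset

lemma aux_sum_shift (a : ℕ → ℝ) (c k : ℕ) :
    ∑ u ∈ range k, a (c + u) = (∑ u ∈ range (c + k), a u) - ∑ u ∈ range c, a u := by
  induction k with
  | zero => simp
  | succ k ih =>
    rw [sum_range_succ, ih, ← add_assoc, sum_range_succ (n := c + k)]
    ring

lemma aux_cycle (n : ℕ) (hn : 1 ≤ n) (a : ℕ → ℝ)
    (hper : ∀ k, a (k + n) = a k)
    (hzero : ∑ u ∈ range n, a u = 0) :
    ∃ j₀, ∀ v, v ≤ n - 1 → 0 ≤ ∑ u ∈ range (v + 1), a (j₀ + u) := by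
  have hAper : ∀ k, ∑ u ∈ range (k + n), a u = ∑ u ∈ range k, a u := by
    intro k
    induction k with
    | zero => simpa using hzero
    | succ k ih =>
      have h1 : k + 1 + n = (k + n) + 1 := by ring
      rw [h1, sum_range_succ, ih, hper, sum_range_succ]
  obtain ⟨m, hm, hmin⟩ := (range n).exists_min_image
      (fun m => ∑ u ∈ range (m + 1), a u) ⟨0, mem_range.mpr hn⟩
  refine ⟨m + 1, fun v hv => ?_⟩
  have key : (∑ u ∈ range (m + 1), a u) ≤ ∑ u ∈ range (m + 1 + (v + 1)), a u := by
    have h1 : m + 1 + (v + 1) = (m + v + 1) + 1 := by ring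
    rw [h1]
    by_cases hc : m + v + 1 < n
    · exact hmin _ (mem_range.mpr hc)
    · push_neg at hc
      have h2 : (m + v + 1) + 1 = ((m + v + 1 - n) + 1) + n := by omega
      rw [h2, hAper]
      apply hmin
      rw [mem_range] at hm ⊢
      omega
  rw [aux_sum_shift]
  linarith

lemma aux_arg_ge (γ : ℝ) (hγ0 : 0 ≤ γ) (hγπ : γ < Real.pi)
    (s : ℂ) (hs : s ≠ 0) (him : 0 ≤ s.im)
    (hf : 0 ≤ (Complex.exp (-(γ:ℂ) * Complex.I) * s).im) : γ ≤ s.arg := by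
  by_contra h
  push_neg at h
  have h0 : 0 ≤ s.arg := Complex.arg_nonneg_iff.mpr him
  have habs : Complex.exp (-(γ:ℂ) * Complex.I) * s
      = (‖s‖ : ℂ) * Complex.exp (((s.arg - γ : ℝ) : ℂ) * Complex.I) := by
    conv_lhs => rw [← Complex.norm_mul_exp_arg_mul_I s]
    rw [mul_comm (Complex.exp _), mul_assoc, ← Complex.exp_add]
    push_cast
    ring_nf
  have him2 : (Complex.exp (-(γ:ℂ) * Complex.I) * s).im
      = ‖s‖ * Real.sin (s.arg - γ) := by
    rw [habs]
    simp only [Complex.mul_im, Complex.ofReal_re, Complex.ofReal_im,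
      Complex.exp_ofReal_mul_I_im, zero_mul, add_zero]
  have hsin : Real.sin (s.arg - γ) < 0 :=
    Real.sin_neg_of_neg_of_neg_pi_lt (by linarith) (by linarith)
  have habs' : 0 < ‖s‖ := by simpa using hs
  nlinarith [him2, hf]

lemma aux_sum_range_cast {M : Type*} [AddCommMonoid M] (n : ℕ) [NeZero n] (g : ZMod n → M) :
    ∑ u ∈ Finset.range n, g (u : ZMod n) = ∑ i : ZMod n, g i := by
  exact Finset.sum_nbij' (fun u => (u : ZMod n)) (fun i => i.val)
    (fun a _ => Finset.mem_univ _)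
    (fun a _ => Finset.mem_range.mpr (ZMod.val_lt a))
    (fun a ha => ZMod.val_cast_of_lt (Finset.mem_range.mp ha))
    (fun a _ => ZMod.natCast_rightInverse a)
    (fun a _ => rfl)

/-- For nonzero complex numbers `z₁, …, zₙ` (`n ≥ 2`) with arguments in `[0, π)` and
nonzero total sum of argument `γ`, there is a residue `i₀ ∈ ℤ/n` such that every backward
cyclic partial sum `z i₀ + z (i₀−1) + ⋯ + z (i₀−v)` for `0 ≤ v ≤ n−1` is nonzero with
argument `≥ γ`. -/
theorem stmt_5 (n : ℕ) [NeZero n] (hn : 2 ≤ n)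
    (z : ZMod n → ℂ)
    (hz : ∀ i, z i ≠ 0 ∧ 0 ≤ (z i).arg ∧ (z i).arg < Real.pi)
    (hsum : (∑ i : ZMod n, z i) ≠ 0)
    (γ : ℝ) (hγ : γ = (∑ i : ZMod n, z i).arg) :
    ∃ i₀ : ZMod n, ∀ v : ℕ, v ≤ n - 1 →
      (∑ u ∈ Finset.range (v + 1), z (i₀ - (u : ZMod n))) ≠ 0 ∧
      γ ≤ (∑ u ∈ Finset.range (v + 1), z (i₀ - (u : ZMod n))).arg := by
  have him : ∀ i, 0 ≤ (z i).im := fun i => Complex.arg_nonneg_iff.mp (hz i).2.1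
  have hre : ∀ i, (z i).im = 0 → 0 < (z i).re := by
    intro i h0
    rcases lt_trichotomy (z i).re 0 with h | h | h
    · exact absurd (Complex.arg_eq_pi_iff.mpr ⟨h, h0⟩) (by linarith [(hz i).2.2])
    · exact absurd (Complex.ext h h0) (hz i).1
    · exact h
  set T := ∑ i : ZMod n, z i with hT
  have hTim : T.im = ∑ i : ZMod n, (z i).im := Complex.im_sum _ _
  have hγ0 : 0 ≤ γ := by
    rw [hγ]
    exact Complex.arg_nonneg_iff.mpr (hTim ▸ Finset.sum_nonneg fun i _ => him i)
  have hγπ : γ < Real.pi := by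
    rcases lt_or_eq_of_le (hγ ▸ Complex.arg_le_pi T) with h | h
    · exact h
    · exfalso
      obtain ⟨h1, h2⟩ := Complex.arg_eq_pi_iff.mp (hγ ▸ h)
      rw [hTim] at h2
      have hz0 : ∀ i ∈ Finset.univ, (z i).im = 0 :=
        (Finset.sum_eq_zero_iff_of_nonneg fun i _ => him i).mp h2
      have : 0 < T.re := by
        rw [Complex.re_sum]
        exact Finset.sum_pos (fun i _ => hre i (hz0 i (Finset.mem_univ i)))
          ⟨0, Finset.mem_univ 0⟩
      linarith
  -- partial sums are nonzero with nonneg imaginary part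
  have hP : ∀ (s : Finset ℕ) (g : ℕ → ZMod n), s.Nonempty →
      (∑ u ∈ s, z (g u)) ≠ 0 ∧ 0 ≤ (∑ u ∈ s, z (g u)).im := by
    intro s g hs
    have h1 : (∑ u ∈ s, z (g u)).im = ∑ u ∈ s, (z (g u)).im := Complex.im_sum _ _
    have h2 : 0 ≤ (∑ u ∈ s, z (g u)).im :=
      h1 ▸ Finset.sum_nonneg fun u _ => him _
    refine ⟨fun hP0 => ?_, h2⟩
    have h3 : ∀ u ∈ s, (z (g u)).im = 0 :=
      (Finset.sum_eq_zero_iff_of_nonneg fun u _ => him _).mp (by rw [← h1, hP0]; simp)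
    have h4 : 0 < (∑ u ∈ s, z (g u)).re := by
      rw [Complex.re_sum]
      exact Finset.sum_pos (fun u hu => hre _ (h3 u hu)) hs
    rw [hP0] at h4
    simp at h4
  -- the real sequence
  set a : ℕ → ℝ := fun k => (Complex.exp (-(γ:ℂ) * Complex.I) * z (-(k : ZMod n))).im
    with ha
  have hper : ∀ k, a (k + n) = a k := by
    intro k
    simp only [ha]
    congr 2
    push_cast
    simp [ZMod.natCast_self]
  have hrot : Complex.exp (-(γ:ℂ) * Complex.I) * T = (‖T‖ : ℂ) := by
    conv_lhs => rw [← Complex.norm_mul_exp_arg_mul_I T]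
    rw [mul_comm (Complex.exp _), mul_assoc, ← Complex.exp_add, ← hγ]
    have : (γ:ℂ) * Complex.I + -(γ:ℂ) * Complex.I = 0 := by ring
    rw [this, Complex.exp_zero, mul_one]
  have hzero : ∑ u ∈ Finset.range n, a u = 0 := by
    have h1 : ∑ u ∈ Finset.range n, a u
        = (Complex.exp (-(γ:ℂ) * Complex.I) * ∑ u ∈ Finset.range n, z (-(u : ZMod n))).im := by
      rw [Finset.mul_sum, Complex.im_sum]
    have h2 : ∑ u ∈ Finset.range n, z (-(u : ZMod n)) = T := by
      rw [aux_sum_range_cast n (fun i => z (-i)), hT]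
      exact Fintype.sum_equiv (Equiv.neg (ZMod n)) _ _ fun i => rfl
    rw [h1, h2, hrot]
    simp
  obtain ⟨j₀, hj₀⟩ := aux_cycle n (by omega) a hper hzero
  refine ⟨-(j₀ : ZMod n), fun v hv => ?_⟩
  set P := ∑ u ∈ Finset.range (v + 1), z (-(j₀ : ZMod n) - (u : ZMod n)) with hPdef
  obtain ⟨hPne, hPim⟩ := hP (Finset.range (v + 1)) (fun u => -(j₀ : ZMod n) - (u : ZMod n))
    Finset.nonempty_range_add_one
  refine ⟨hPne, ?_⟩
  apply aux_arg_ge γ hγ0 hγπ P hPne hPim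
  have h5 : (Complex.exp (-(γ:ℂ) * Complex.I) * P).im
      = ∑ u ∈ Finset.range (v + 1), a (j₀ + u) := by
    rw [hPdef, Finset.mul_sum, Complex.im_sum]
    apply Finset.sum_congr rfl
    intro u _
    simp only [ha]
    congr 3
    push_cast
    ring
  rw [h5]
  exact hj₀ v hv
end

section
/- Let Z be a stability function on the category 𝒯ₙ of nilpotent representations of the cyclic quiver with n vertices. Every Z-stable object has length at most n. Consequently there are only finitely many stable objects up to isomorphism. -/
/-- A finite-dimensional nilpotent representation of the cyclic quiver `Δₙ`
(equivalently an object of `𝒯ₙ`): a finite-dimensional `k`-vector space with an internal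
grading by `ZMod n` and a nilpotent linear endomorphism mapping the piece at vertex `i`
into the piece at vertex `i - 1`. -/
structure NilpRep (k : Type) [Field k] (n : ℕ) [NeZero n] where
  carrier : Type
  [acg : AddCommGroup carrier]
  [mod : Module k carrier]
  [fin : FiniteDimensional k carrier]
  grading : ZMod n → Submodule k carrier
  t : carrier →ₗ[k] carrier
  indep : ∀ i : ZMod n, Disjoint (grading i) (⨆ j, ⨆ (_ : j ≠ i), grading j)
  total : (⨆ i, grading i) = ⊤
  maps : ∀ i, (grading i).map t ≤ grading (i - 1)
  nilpotent : ∃ N : ℕ, t ^ N = 0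

attribute [instance] NilpRep.acg NilpRep.mod NilpRep.fin

variable {k : Type} [Field k] {n : ℕ} [NeZero n]

namespace NilpRep

/-- The dimension vector of a nilpotent representation, i.e. its class in `K₀(𝒯ₙ) ≅ ℤⁿ`. -/
noncomputable def dim (M : NilpRep k n) : ZMod n → ℤ := fun i => (Module.finrank k (M.grading i) : ℤ)

/-- The length of an object of `𝒯ₙ`, which equals its total dimension. -/
noncomputable def length (M : NilpRep k n) : ℕ := Module.finrank k M.carrier

/-- A subrepresentation: a `t`-invariant homogeneous subspace. -/
def IsSubRep (M : NilpRep k n) (U : Submodule k M.carrier) : Prop :=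
  U.map M.t ≤ U ∧ (⨆ i : ZMod n, (M.grading i ⊓ U)) = U

/-- The dimension vector of a subrepresentation. -/
noncomputable def subDim (M : NilpRep k n) (U : Submodule k M.carrier) : ZMod n → ℤ :=
  fun i => (Module.finrank k ↥(M.grading i ⊓ U) : ℤ)

/-- Isomorphism of nilpotent representations. -/
def RepIso (M N : NilpRep k n) : Prop :=
  ∃ e : M.carrier ≃ₗ[k] N.carrier,
    (∀ x, e (M.t x) = N.t (e x)) ∧
    ∀ i, (M.grading i).map (e : M.carrier →ₗ[k] N.carrier) = N.grading i

/-- Indecomposability of a nonzero representation. -/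
def Indec (M : NilpRep k n) : Prop :=
  M.dim ≠ 0 ∧ ∀ U V : Submodule k M.carrier, M.IsSubRep U → M.IsSubRep V →
    U ⊓ V = ⊥ → U ⊔ V = ⊤ → U = ⊥ ∨ V = ⊥

end NilpRep

/-- A stability function on `𝒯ₙ`, given on the Grothendieck group `K₀(𝒯ₙ) ≅ ℤⁿ`:
additive, and nonzero with argument in `[0, π)` on every nonzero effective class
(i.e. on the class of every nonzero object). -/
def IsStabilityFunction (n : ℕ) [NeZero n] (Z : (ZMod n → ℤ) → ℂ) : Prop :=
  (∀ d e, Z (d + e) = Z d + Z e) ∧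
  ∀ d : ZMod n → ℤ, (∀ i, 0 ≤ d i) → d ≠ 0 →
    Z d ≠ 0 ∧ 0 ≤ (Z d).arg ∧ (Z d).arg < Real.pi

/-- An object is `Z`-stable if it is nonzero and every nonzero proper subrepresentation
has strictly smaller phase. -/
def IsStable (Z : (ZMod n → ℤ) → ℂ) (M : NilpRep k n) : Prop :=
  M.dim ≠ 0 ∧ ∀ U : Submodule k M.carrier, M.IsSubRep U → U ≠ ⊥ → U ≠ ⊤ →
    (Z (M.subDim U)).arg < (Z M.dim).arg

/-- An object is `Z`-semistable if it is nonzero and every nonzero proper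
subrepresentation has phase at most that of the object. -/
def IsSemistable (Z : (ZMod n → ℤ) → ℂ) (M : NilpRep k n) : Prop :=
  M.dim ≠ 0 ∧ ∀ U : Submodule k M.carrier, M.IsSubRep U → U ≠ ⊥ → U ≠ ⊤ →
    (Z (M.subDim U)).arg ≤ (Z M.dim).arg

/-- A stability function is discrete if distinct (non-isomorphic) stable objects have
distinct phases. -/
def IsDiscreteStab (k : Type) [Field k] {n : ℕ} [NeZero n] (Z : (ZMod n → ℤ) → ℂ) : Prop :=
  ∀ M N : NilpRep k n, IsStable Z M → IsStable Z N →
    (Z M.dim).arg = (Z N.dim).arg → NilpRep.RepIso M N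

namespace NilpRep

variable (M : NilpRep k n)

lemma sum_graded_eq_zero {y : ZMod n → M.carrier} (hy : ∀ i, y i ∈ M.grading i)
    (h : ∑ i, y i = 0) : ∀ i, y i = 0 := by
  intro i
  have h1 : ∑ j ∈ Finset.univ.erase i, y j + y i = 0 := by
    rw [Finset.sum_erase_add _ _ (Finset.mem_univ i)]; exact h
  have h2 : y i = -∑ j ∈ Finset.univ.erase i, y j := eq_neg_of_add_eq_zero_right h1
  have hmem : y i ∈ (⨆ j, ⨆ (_ : j ≠ i), M.grading j) := by
    rw [h2]
    refine neg_mem (Submodule.sum_mem _ fun j hj => ?_)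
    exact le_iSup₂ (f := fun j (_ : j ≠ i) => M.grading j) j (Finset.ne_of_mem_erase hj) (hy j)
  have := (M.indep i).le_bot ⟨hy i, hmem⟩
  simpa using this

lemma exists_decomp (x : M.carrier) :
    ∃ y : ZMod n → M.carrier, (∀ i, y i ∈ M.grading i) ∧ ∑ i, y i = x := by
  have hx : x ∈ ⨆ i, M.grading i := by rw [M.total]; trivial
  rw [Submodule.mem_iSup_iff_exists_finsupp] at hx
  obtain ⟨f, hf, hsum⟩ := hx
  refine ⟨f, hf, ?_⟩
  rw [← hsum, Finsupp.sum_fintype]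
  · exact fun _ => rfl

lemma component_eq {m : ZMod n} {x : M.carrier} (hx : x ∈ M.grading m)
    {y : ZMod n → M.carrier} (hy : ∀ i, y i ∈ M.grading i) (hsum : ∑ i, y i = x) :
    y m = x := by
  classical
  set z : ZMod n → M.carrier := fun j => y j - if j = m then x else 0 with hz
  have hzmem : ∀ j, z j ∈ M.grading j := by
    intro j
    by_cases hj : j = m
    · subst hj; simpa [z] using sub_mem (hy j) hx
    · simpa [z, hj] using hy j
  have hzsum : ∑ j, z j = 0 := by
    simp only [z, Finset.sum_sub_distrib, hsum, Finset.sum_ite_eq' Finset.univ m fun _ => x,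
      Finset.mem_univ, if_true, sub_self]
  have := M.sum_graded_eq_zero hzmem hzsum m
  have : y m - x = 0 := by simpa [z] using this
  exact sub_eq_zero.mp this

lemma pow_mem_grading {i : ZMod n} {x : M.carrier} (hx : x ∈ M.grading i) (m : ℕ) :
    (M.t ^ m) x ∈ M.grading (i - (m : ZMod n)) := by
  induction m with
  | zero => simpa using hx
  | succ p ih =>
      have h1 : (M.t ^ (p + 1)) x = M.t ((M.t ^ p) x) := by
        rw [pow_succ']; rfl
      have h2 := M.maps (i - (p : ZMod n)) (Submodule.mem_map_of_mem ih)
      rw [h1]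
      convert h2 using 2
      push_cast; ring

lemma inf_iSup_inf (K : Submodule k M.carrier) (m : ZMod n) :
    M.grading m ⊓ (⨆ j, M.grading j ⊓ K) = M.grading m ⊓ K := by
  refine le_antisymm ?_ (le_inf inf_le_left (le_iSup (fun j => M.grading j ⊓ K) m))
  · intro u hu
    obtain ⟨hum, huW⟩ := Submodule.mem_inf.mp hu
    rw [Submodule.mem_iSup_iff_exists_finsupp] at huW
    obtain ⟨f, hf, hsum⟩ := huW
    have hsum' : ∑ j, f j = u := by
      rw [← hsum, Finsupp.sum_fintype]; exact fun _ => rfl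
    have hfg : ∀ j, f j ∈ M.grading j := fun j => (hf j).1
    have := M.component_eq hum hfg hsum'
    exact Submodule.mem_inf.mpr ⟨hum, this ▸ ((Submodule.mem_inf.mp (hf m)).2)⟩

lemma nontrivial_carrier (h : M.dim ≠ 0) : Nontrivial M.carrier := by
  have : ∃ i, M.dim i ≠ 0 := by
    by_contra hc; push_neg at hc; exact h (funext hc)
  obtain ⟨i, hi⟩ := this
  have : M.grading i ≠ ⊥ := by
    intro hb
    rw [NilpRep.dim] at hi
    rw [hb] at hi; simp at hi
  obtain ⟨v, hv, hv0⟩ := Submodule.exists_mem_ne_zero_of_ne_bot this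
  exact ⟨v, 0, hv0⟩

lemma subDim_ne_zero {U : Submodule k M.carrier} (hU : M.IsSubRep U) (h : U ≠ ⊥) :
    M.subDim U ≠ 0 := by
  have h2 := hU.2
  have : ∃ i, M.grading i ⊓ U ≠ ⊥ := by
    by_contra hc; push_neg at hc
    exact h (by rw [← h2]; simp [hc])
  obtain ⟨i, hi⟩ := this
  intro hc
  have := congrFun hc i
  rw [NilpRep.subDim] at this
  simp only [Pi.zero_apply, Int.natCast_eq_zero] at this
  rw [Submodule.finrank_eq_zero] at this
  exact hi this

lemma subDim_nonneg (U : Submodule k M.carrier) : ∀ i, 0 ≤ M.subDim U i :=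
  fun i => Int.natCast_nonneg _

lemma dim_nonneg : ∀ i, 0 ≤ M.dim i := fun i => Int.natCast_nonneg _


end NilpRep

open Complex in
lemma arg_im_pos {a c : ℂ} (ha : a ≠ 0) (ha0 : 0 ≤ a.arg) (hc : c.arg < Real.pi)
    (h : a.arg < c.arg) : 0 < (c * (starRingEnd ℂ) a).im := by
  have hc0 : c ≠ 0 := by
    intro h0; rw [h0, Complex.arg_zero] at h; exact absurd (h.trans_le ha0) (lt_irrefl _).elim
  have him : (c * (starRingEnd ℂ) a).im = ‖c‖ * ‖a‖ *
      Real.sin (c.arg - a.arg) := by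
    have h1 : (c * (starRingEnd ℂ) a).im = c.im * a.re - c.re * a.im := by
      simp [Complex.mul_im, Complex.conj_re, Complex.conj_im]; ring
    rw [h1, ← Complex.norm_mul_sin_arg c, ← Complex.norm_mul_cos_arg a,
      ← Complex.norm_mul_cos_arg c, ← Complex.norm_mul_sin_arg a, Real.sin_sub]
    ring
  rw [him]
  have : 0 < Real.sin (c.arg - a.arg) :=
    Real.sin_pos_of_pos_of_lt_pi (by linarith) (by
      have := Complex.neg_pi_lt_arg a; linarith)
  have hca : 0 < ‖c‖ := norm_pos_iff.mpr hc0
  have haa : 0 < ‖a‖ := norm_pos_iff.mpr ha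
  positivity

lemma no_two_smaller_args {a b : ℂ} (ha : a ≠ 0) (hb : b ≠ 0) (ha0 : 0 ≤ a.arg)
    (hb0 : 0 ≤ b.arg) (hab : (a + b).arg < Real.pi)
    (h1 : a.arg < (a + b).arg) (h2 : b.arg < (a + b).arg) : False := by
  have p1 := arg_im_pos ha ha0 hab h1
  have p2 := arg_im_pos hb hb0 hab h2
  have h0 : ((a + b) * (starRingEnd ℂ) (a + b)).im = 0 := by
    rw [Complex.mul_conj]; simp
  rw [map_add, mul_add] at h0
  simp only [Complex.add_im] at h0
  linarith

lemma no_comp {Z : (ZMod n → ℤ) → ℂ} (hZ : IsStabilityFunction n Z) {M : NilpRep k n}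
    (hM : IsStable Z M) {U W : Submodule k M.carrier}
    (hU : M.IsSubRep U) (hW : M.IsSubRep W) (hU0 : U ≠ ⊥) (hU1 : U ≠ ⊤)
    (hW0 : W ≠ ⊥) (hW1 : W ≠ ⊤)
    (hsum : ∀ i, M.subDim U i + M.subDim W i = M.dim i) : False := by
  obtain ⟨haZ, ha0, _⟩ := hZ.2 _ (M.subDim_nonneg U) (M.subDim_ne_zero hU hU0)
  obtain ⟨hbZ, hb0, _⟩ := hZ.2 _ (M.subDim_nonneg W) (M.subDim_ne_zero hW hW0)
  obtain ⟨hcZ, hc0, hcpi⟩ := hZ.2 _ M.dim_nonneg hM.1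
  have hsum' : Z (M.subDim U) + Z (M.subDim W) = Z M.dim := by
    rw [← hZ.1]; congr 1; funext i; simpa using hsum i
  have h1 := hM.2 U hU hU0 hU1
  have h2 := hM.2 W hW hW0 hW1
  rw [← hsum'] at h1 h2 hcpi
  exact no_two_smaller_args haZ hbZ ha0 hb0 hcpi h1 h2

lemma pow_surjective {V : Type} [AddCommGroup V] [Module k V] (f : V →ₗ[k] V)
    (hs : Function.Surjective f) : ∀ m, Function.Surjective ⇑(f ^ m) := by
  intro m; induction m with
  | zero => simpa [Module.End.coe_one] using Function.surjective_id
  | succ p ih =>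
      rw [pow_succ, Module.End.mul_eq_comp, LinearMap.coe_comp]
      exact Function.Surjective.comp ih hs

lemma pow_injective {V : Type} [AddCommGroup V] [Module k V] (f : V →ₗ[k] V)
    (hs : Function.Injective f) : ∀ m, Function.Injective ⇑(f ^ m) := by
  intro m; induction m with
  | zero => simpa [Module.End.coe_one] using Function.injective_id
  | succ p ih =>
      rw [pow_succ, Module.End.mul_eq_comp, LinearMap.coe_comp]
      exact Function.Injective.comp ih hs

lemma stable_tn {Z : (ZMod n → ℤ) → ℂ} (hZ : IsStabilityFunction n Z) {M : NilpRep k n}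
    (hM : IsStable Z M) : M.t ^ n = 0 := by
  by_contra htn
  have hnontriv := M.nontrivial_carrier hM.1
  obtain ⟨N, hN⟩ := M.nilpotent
  set f := M.t ^ n with hf
  have hcomm : M.t * f = f * M.t := ((Commute.refl M.t).pow_right n).eq
  have hcommapp : ∀ z, M.t (f z) = f (M.t z) := by
    intro z
    rw [← Module.End.mul_apply, ← Module.End.mul_apply, hcomm]
  have hfN : f ^ N = 0 := by
    rw [hf, ← pow_mul, mul_comm n N, pow_mul, hN, zero_pow (NeZero.ne n)]
  have hshift : ∀ {j : ZMod n} {x : M.carrier}, x ∈ M.grading j → f x ∈ M.grading j := by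
    intro j x hx
    have := M.pow_mem_grading hx n
    simpa [ZMod.natCast_self] using this
  set U := LinearMap.range f with hU
  set W := LinearMap.ker f with hW
  have hUsub : M.IsSubRep U := by
    constructor
    · rintro y hy
      obtain ⟨x, hx, rfl⟩ := Submodule.mem_map.mp hy
      obtain ⟨z, rfl⟩ := LinearMap.mem_range.mp hx
      rw [hcommapp z]
      exact LinearMap.mem_range_self f (M.t z)
    · refine le_antisymm (iSup_le fun i => inf_le_right) ?_
      rintro x hx
      obtain ⟨z, rfl⟩ := LinearMap.mem_range.mp hx
      obtain ⟨y, hy, hsum⟩ := M.exists_decomp z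
      have : f z = ∑ j, f (y j) := by rw [← map_sum, hsum]
      rw [this]
      refine Submodule.sum_mem _ fun j _ => ?_
      exact le_iSup (fun i => M.grading i ⊓ U) j
        (Submodule.mem_inf.mpr ⟨hshift (hy j), LinearMap.mem_range_self f (y j)⟩)
  have hWsub : M.IsSubRep W := by
    constructor
    · rintro y hy
      obtain ⟨x, hx, rfl⟩ := Submodule.mem_map.mp hy
      have hx0 : f x = 0 := LinearMap.mem_ker.mp hx
      exact LinearMap.mem_ker.mpr (by rw [← hcommapp x, hx0, map_zero])
    · refine le_antisymm (iSup_le fun i => inf_le_right) ?_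
      rintro x hx
      have hx0 : f x = 0 := LinearMap.mem_ker.mp hx
      obtain ⟨y, hy, hsum⟩ := M.exists_decomp x
      have hz : ∑ j, f (y j) = 0 := by rw [← map_sum, hsum, hx0]
      have hcomp := M.sum_graded_eq_zero (fun j => hshift (hy j)) hz
      rw [← hsum]
      refine Submodule.sum_mem _ fun j _ => ?_
      exact le_iSup (fun i => M.grading i ⊓ W) j
        (Submodule.mem_inf.mpr ⟨hy j, LinearMap.mem_ker.mpr (hcomp j)⟩)
  have hU0 : U ≠ ⊥ := fun h => htn (LinearMap.range_eq_bot.mp h)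
  have hW1 : W ≠ ⊤ := fun h => htn (LinearMap.ker_eq_top.mp h)
  have hU1 : U ≠ ⊤ := by
    intro h
    have hs : Function.Surjective f := LinearMap.range_eq_top.mp (hU ▸ h)
    obtain ⟨v, hv⟩ := exists_ne (0 : M.carrier)
    obtain ⟨w, hw⟩ := pow_surjective f hs N v
    rw [hfN] at hw
    exact hv (by simpa using hw.symm)
  have hW0 : W ≠ ⊥ := by
    intro h
    have hi : Function.Injective f := by
      rw [hW] at h; exact LinearMap.ker_eq_bot.mp h
    obtain ⟨x, y, hxy⟩ := exists_pair_ne M.carrier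
    have hinj := pow_injective f hi N
    rw [hfN] at hinj
    exact hxy (hinj (by simp))
  refine no_comp hZ hM hUsub hWsub hU0 hU1 hW0 hW1 ?_
  intro i
  set φ : M.grading i →ₗ[k] M.carrier := f ∘ₗ (M.grading i).subtype with hφ
  have h1 := LinearMap.finrank_range_add_finrank_ker φ
  have hker : LinearMap.ker φ = Submodule.comap (M.grading i).subtype W := by
    rw [hφ, LinearMap.ker_comp]
  have hkerrank : Module.finrank k (M.grading i ⊓ W : Submodule k M.carrier)
      = Module.finrank k (LinearMap.ker φ) := by
    rw [hker, ← Submodule.map_comap_subtype, Submodule.finrank_map_subtype_eq]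
  have hrange : LinearMap.range φ = Submodule.map f (M.grading i) := by
    rw [hφ, LinearMap.range_comp, Submodule.range_subtype]
  have hmap : Submodule.map f (M.grading i) = M.grading i ⊓ U := by
    refine le_antisymm ?_ ?_
    · rintro y hy
      obtain ⟨x, hx, rfl⟩ := Submodule.mem_map.mp hy
      exact Submodule.mem_inf.mpr ⟨hshift hx, LinearMap.mem_range_self f x⟩
    · rintro x hx
      obtain ⟨hxg, hxr⟩ := Submodule.mem_inf.mp hx
      obtain ⟨z, rfl⟩ := LinearMap.mem_range.mp hxr
      obtain ⟨y, hy, hsum⟩ := M.exists_decomp z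
      have hzs : ∑ j, f (y j) = f z := by rw [← map_sum, hsum]
      have := M.component_eq hxg (fun j => hshift (hy j)) hzs
      exact Submodule.mem_map.mpr ⟨y i, hy i, this⟩
  have hurank : Module.finrank k (M.grading i ⊓ U : Submodule k M.carrier)
      = Module.finrank k (LinearMap.range φ) := by rw [hrange, hmap]
  show (Module.finrank k (M.grading i ⊓ U : Submodule k M.carrier) : ℤ)
      + (Module.finrank k (M.grading i ⊓ W : Submodule k M.carrier) : ℤ)
      = (Module.finrank k (M.grading i) : ℤ)
  rw [hurank, hkerrank]
  exact_mod_cast h1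


def Spec (i : ZMod n) (r : ℕ) (M : NilpRep k n) : Prop :=
  M.length = r ∧ ∃ x : M.carrier,
    (M.t ^ r) x = 0 ∧
    LinearIndependent k (fun j : Fin r => (M.t ^ (j : ℕ)) x) ∧
    ∀ m : ZMod n, M.grading m =
      Submodule.span k ((fun j : Fin r => (M.t ^ (j : ℕ)) x) '' {j | i - ((j : ℕ) : ZMod n) = m})

set_option maxHeartbeats 1000000 in
lemma stable_spec {Z : (ZMod n → ℤ) → ℂ} (hZ : IsStabilityFunction n Z) {M : NilpRep k n}
    (hM : IsStable Z M) : ∃ (i : ZMod n) (r : ℕ), 1 ≤ r ∧ r ≤ n ∧ Spec i r M := by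
  classical
  have htn := stable_tn hZ hM
  have hnontriv := M.nontrivial_carrier hM.1
  have hex : ∃ m, M.t ^ m = 0 := ⟨n, htn⟩
  set r := Nat.find hex with hrdef
  have hr0 : M.t ^ r = 0 := Nat.find_spec hex
  have hrn : r ≤ n := Nat.find_min' hex htn
  have hrpos : 0 < r := by
    rcases Nat.eq_zero_or_pos r with h | h
    · exfalso
      rw [h, pow_zero] at hr0
      obtain ⟨a, b, hab⟩ := exists_pair_ne M.carrier
      have ha := DFunLike.congr_fun hr0 a
      have hb := DFunLike.congr_fun hr0 b
      simp only [Module.End.one_apply, LinearMap.zero_apply] at ha hb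
      exact hab (ha.trans hb.symm)
    · exact h
  have hr1 : M.t ^ (r - 1) ≠ 0 := Nat.find_min hex (by omega)
  -- homogeneous element of maximal order
  obtain ⟨y0, hy0⟩ : ∃ y0, (M.t ^ (r - 1)) y0 ≠ 0 := by
    by_contra hc; push_neg at hc; exact hr1 (LinearMap.ext hc)
  obtain ⟨y, hy, hysum⟩ := M.exists_decomp y0
  obtain ⟨i, hi⟩ : ∃ j, (M.t ^ (r - 1)) (y j) ≠ 0 := by
    by_contra hc; push_neg at hc
    apply hy0; rw [← hysum, map_sum]
    exact Finset.sum_eq_zero fun j _ => hc j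
  set x := y i with hxdef
  have hxg : x ∈ M.grading i := hy i
  set v := (M.t ^ (r - 1)) x with hvdef
  have hv : v ≠ 0 := hi
  have hpow : ∀ (a b : ℕ) (z : M.carrier), (M.t ^ a) ((M.t ^ b) z) = (M.t ^ (a + b)) z := by
    intro a b z; rw [pow_add, Module.End.mul_apply]
  set f : Fin r → M.carrier := fun j => (M.t ^ (j : ℕ)) x with hfdef
  have hfg : ∀ j : Fin r, f j ∈ M.grading (i - ((j : ℕ) : ZMod n)) :=
    fun j => M.pow_mem_grading hxg (j : ℕ)
  have hfne : ∀ j : Fin r, f j ≠ 0 := by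
    intro j hj0
    apply hv
    have hj := j.isLt
    have he : r - 1 - (j : ℕ) + (j : ℕ) = r - 1 := by omega
    have h1 : (M.t ^ (r - 1 - (j : ℕ))) (f j) = (M.t ^ (r - 1)) x := by
      rw [hfdef, hpow, he]
    rw [hvdef, ← h1, hj0, map_zero]
  have hinj : ∀ j1 j2 : Fin r, (i - ((j1 : ℕ) : ZMod n)) = i - ((j2 : ℕ) : ZMod n) → j1 = j2 := by
    intro j1 j2 h
    have h2 : (((j1 : ℕ) : ZMod n)) = ((j2 : ℕ) : ZMod n) := by
      have := sub_right_injective h; simpa using this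
    have h3 := congrArg ZMod.val h2
    rw [ZMod.val_cast_of_lt (lt_of_lt_of_le j1.2 hrn),
      ZMod.val_cast_of_lt (lt_of_lt_of_le j2.2 hrn)] at h3
    exact Fin.ext h3
  have hfib : ∀ (c : Fin r → k) (m : ZMod n),
      (∑ j ∈ Finset.univ.filter (fun j : Fin r => i - ((j : ℕ) : ZMod n) = m), c j • f j)
        ∈ M.grading m := by
    intro c m
    refine Submodule.sum_mem _ fun j hj => ?_
    have := (Finset.mem_filter.mp hj).2
    exact this ▸ Submodule.smul_mem _ _ (hfg j)
  have hfibsum : ∀ (c : Fin r → k),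
      ∑ m : ZMod n, (∑ j ∈ Finset.univ.filter (fun j : Fin r => i - ((j : ℕ) : ZMod n) = m),
        c j • f j) = ∑ j, c j • f j :=
    fun c => Finset.sum_fiberwise _ _ _
  have hli : LinearIndependent k f := by
    rw [Fintype.linearIndependent_iff]
    intro c hc j
    have hz := M.sum_graded_eq_zero (hfib c) (by rw [hfibsum]; exact hc)
      (i - ((j : ℕ) : ZMod n))
    have hsingle : Finset.univ.filter
        (fun j' : Fin r => i - ((j' : ℕ) : ZMod n) = i - ((j : ℕ) : ZMod n)) = {j} := by
      ext j'
      simp only [Finset.mem_filter, Finset.mem_univ, true_and, Finset.mem_singleton]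
      exact ⟨fun h => hinj _ _ h, fun h => by rw [h]⟩
    rw [hsingle, Finset.sum_singleton] at hz
    rcases smul_eq_zero.mp hz with h | h
    · exact h
    · exact absurd h (hfne j)
  set U := Submodule.span k (Set.range f) with hUdef
  have hUsub : M.IsSubRep U := by
    constructor
    · rw [Submodule.map_span_le]
      rintro z ⟨j, rfl⟩
      have h1 : M.t (f j) = (M.t ^ ((j : ℕ) + 1)) x := by
        have := hpow 1 (j : ℕ) x
        rw [pow_one] at this
        rw [hfdef]
        simp only []
        rw [this, Nat.add_comm]
      by_cases hjr : (j : ℕ) + 1 < r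
      · rw [h1]
        exact Submodule.subset_span ⟨⟨(j : ℕ) + 1, hjr⟩, rfl⟩
      · have hjr' : (j : ℕ) + 1 = r := by omega
        rw [h1, hjr', hr0]
        simp
    · refine le_antisymm (iSup_le fun m => inf_le_right) ?_
      conv_lhs => rw [hUdef]
      rw [Submodule.span_le]
      rintro z ⟨j, rfl⟩
      exact le_iSup (fun m => M.grading m ⊓ U) (i - ((j : ℕ) : ZMod n))
        (Submodule.mem_inf.mpr ⟨hfg j, Submodule.subset_span ⟨j, rfl⟩⟩)
  have HU : ∀ m : ZMod n, M.grading m ⊓ U =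
      Submodule.span k (f '' {j | i - ((j : ℕ) : ZMod n) = m}) := by
    intro m
    refine le_antisymm ?_ ?_
    · intro u hu
      obtain ⟨hum, huU⟩ := Submodule.mem_inf.mp hu
      obtain ⟨c, hc⟩ := (Submodule.mem_span_range_iff_exists_fun k).mp huU
      have hcomp := M.component_eq hum (fun p => hfib c p) (by rw [hfibsum]; exact hc)
      rw [← hcomp]
      refine Submodule.sum_mem _ fun j hj => Submodule.smul_mem _ _ ?_
      exact Submodule.subset_span ⟨j, (Finset.mem_filter.mp hj).2, rfl⟩
    · rw [Submodule.span_le]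
      rintro z ⟨j, hj, rfl⟩
      exact Submodule.mem_inf.mpr ⟨hj ▸ hfg j, Submodule.subset_span ⟨j, rfl⟩⟩
  by_cases hUtop : U = ⊤
  · refine ⟨i, r, hrpos, hrn, ?_, x, DFunLike.congr_fun hr0 x, hli, ?_⟩
    · have h1 : Module.finrank k U = r := by
        rw [hUdef, finrank_span_eq_card hli, Fintype.card_fin]
      have h2 : M.length = Module.finrank k (⊤ : Submodule k M.carrier) :=
        (finrank_top k M.carrier).symm
      rw [h2, ← hUtop, h1]
    · intro m
      have h3 := HU m
      rw [hUtop, inf_top_eq] at h3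
      rw [← hfdef]
      exact h3
  · exfalso
    -- the cyclic subrep U is proper; construct the complementary-type subrep W
    set i' : ZMod n := i - ((r - 1 : ℕ) : ZMod n) with hi'def
    have hvg : v ∈ M.grading i' := M.pow_mem_grading hxg (r - 1)
    set p : Submodule k M.carrier := ⨆ j, ⨆ (_ : j ≠ i'), M.grading j with hpdef
    have hvp : v ∉ p := by
      intro h
      exact hv (by simpa using (M.indep i').le_bot ⟨hvg, h⟩)
    have hqv : p.mkQ v ≠ 0 := by
      intro h
      rw [Submodule.mkQ_apply, Submodule.Quotient.mk_eq_zero] at h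
      exact hvp h
    obtain ⟨φ, hφ⟩ : ∃ φ : Module.Dual k (M.carrier ⧸ p), φ (p.mkQ v) ≠ 0 := by
      by_contra hc; push_neg at hc
      exact hqv ((Module.forall_dual_apply_eq_zero_iff k _).mp hc)
    set ξ : M.carrier →ₗ[k] k := φ ∘ₗ p.mkQ with hξdef
    have hξv : ξ v ≠ 0 := hφ
    have hξg : ∀ {j : ZMod n} {z : M.carrier}, j ≠ i' → z ∈ M.grading j → ξ z = 0 := by
      intro j z hj hz
      have hzp : z ∈ p :=
        (le_iSup₂ (f := fun j (_ : j ≠ i') => M.grading j) j hj) hz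
      have : p.mkQ z = 0 := by
        rw [Submodule.mkQ_apply, Submodule.Quotient.mk_eq_zero]; exact hzp
      rw [hξdef, LinearMap.comp_apply, this, map_zero]
    set K : Submodule k M.carrier := ⨅ m : Fin r, LinearMap.ker (ξ ∘ₗ (M.t ^ (m : ℕ)))
      with hKdef
    have mem_K : ∀ z : M.carrier, z ∈ K ↔ ∀ m : Fin r, ξ ((M.t ^ (m : ℕ)) z) = 0 := by
      intro z
      simp [hKdef, Submodule.mem_iInf, LinearMap.mem_ker]
    have hKt : ∀ z ∈ K, M.t z ∈ K := by
      intro z hz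
      rw [mem_K] at hz ⊢
      intro m
      have h1 : (M.t ^ (m : ℕ)) (M.t z) = (M.t ^ ((m : ℕ) + 1)) z := by
        have := hpow (m : ℕ) 1 z
        rw [pow_one] at this
        exact this
      rw [h1]
      by_cases hm : (m : ℕ) + 1 < r
      · exact hz ⟨(m : ℕ) + 1, hm⟩
      · have hm' : (m : ℕ) + 1 = r := by have := m.isLt; omega
        rw [hm', hr0]
        simp
    set W : Submodule k M.carrier := ⨆ j, (M.grading j ⊓ K) with hWdef
    have hWinf : ∀ m : ZMod n, M.grading m ⊓ W = M.grading m ⊓ K := fun m =>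
      M.inf_iSup_inf K m
    have hWsub : M.IsSubRep W := by
      constructor
      · rw [hWdef, Submodule.map_iSup]
        refine iSup_le fun j => ?_
        have h1 : Submodule.map M.t (M.grading j ⊓ K) ≤ M.grading (j - 1) ⊓ K := by
          rintro z hz
          obtain ⟨w, hw, rfl⟩ := Submodule.mem_map.mp hz
          obtain ⟨hw1, hw2⟩ := Submodule.mem_inf.mp hw
          exact Submodule.mem_inf.mpr ⟨M.maps j (Submodule.mem_map_of_mem hw1), hKt w hw2⟩
        exact le_trans h1 (le_iSup (fun j => M.grading j ⊓ K) (j - 1))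
      · rw [hWdef]
        exact iSup_congr hWinf
    -- arithmetic of the window
    have hvalcast : ∀ a : ZMod n, ((a.val : ℕ) : ZMod n) = a := fun a => by
      rw [ZMod.natCast_val, ZMod.cast_id]
    have hhit : ∀ (m : ZMod n) (mm : ℕ), mm < r → (m - (mm : ZMod n) = i' ↔ mm = (m - i').val) := by
      intro m mm hmm
      constructor
      · intro h
        have h2 : (mm : ZMod n) = m - i' := by
          have : m - (mm : ZMod n) - m = i' - m := by rw [h]
          have h3 : -(mm : ZMod n) = i' - m := by rw [← this]; ring_nf
          have h4 : (mm : ZMod n) = m - i' := by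
            have := congrArg Neg.neg h3
            simpa [neg_sub] using this
          exact h4
        have := congrArg ZMod.val h2
        rwa [ZMod.val_cast_of_lt (lt_of_lt_of_le hmm hrn)] at this
      · intro h
        rw [h, hvalcast]
        ring
    have hoff : ∀ m : ZMod n, r ≤ (m - i').val → M.grading m ≤ K := by
      intro m hm z hz
      rw [mem_K]
      intro mm
      have hne : m - ((mm : ℕ) : ZMod n) ≠ i' := by
        intro h
        have := (hhit m (mm : ℕ) mm.isLt).mp h
        omega
      exact hξg hne (M.pow_mem_grading hz (mm : ℕ))
    have hon : ∀ m : ZMod n, (m - i').val < r →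
        M.grading m ⊓ K = M.grading m ⊓ LinearMap.ker (ξ ∘ₗ (M.t ^ ((m - i').val))) := by
      intro m hm
      ext z
      simp only [Submodule.mem_inf, LinearMap.mem_ker, LinearMap.comp_apply]
      constructor
      · rintro ⟨hz1, hz2⟩
        exact ⟨hz1, (mem_K z).mp hz2 ⟨(m - i').val, hm⟩⟩
      · rintro ⟨hz1, hz2⟩
        refine ⟨hz1, (mem_K z).mpr fun mm => ?_⟩
        by_cases hmm : (mm : ℕ) = (m - i').val
        · rw [hmm]; exact hz2
        · have hne : m - ((mm : ℕ) : ZMod n) ≠ i' := by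
            intro h
            exact hmm ((hhit m (mm : ℕ) mm.isLt).mp h)
          exact hξg hne (M.pow_mem_grading hz1 (mm : ℕ))
    -- dimension counts
    have hcastsub : ∀ s : ℕ, s ≤ r - 1 → ((r - 1 - s : ℕ) : ZMod n) = ((r - 1 : ℕ) : ZMod n)
        - ((s : ℕ) : ZMod n) := by
      intro s hs
      push_cast [Nat.cast_sub hs]
      ring
    have hmform : ∀ m : ZMod n, (m - i').val < r → i - ((r - 1 - (m - i').val : ℕ) : ZMod n) = m := by
      intro m hm
      rw [hcastsub _ (by omega), hi'def]
      have : ((m - i').val : ZMod n) = m - i' := hvalcast _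
      rw [this]
      rw [hi'def]; ring
    have hjform : ∀ j : Fin r, (i - ((j : ℕ) : ZMod n) - i').val = r - 1 - (j : ℕ) := by
      intro j
      have hj := j.isLt
      have h1 : i - ((j : ℕ) : ZMod n) - i' = ((r - 1 - (j : ℕ) : ℕ) : ZMod n) := by
        rw [hcastsub _ (by omega), hi'def]
        ring
      rw [h1, ZMod.val_cast_of_lt (by omega)]
    -- finrank of U-pieces
    have hUdim1 : ∀ m : ZMod n, (m - i').val < r → M.subDim U m = 1 := by
      intro m hm
      set j0 : Fin r := ⟨r - 1 - (m - i').val, by omega⟩ with hj0def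
      have hj0 : i - ((j0 : ℕ) : ZMod n) = m := hmform m hm
      have hset : {j : Fin r | i - ((j : ℕ) : ZMod n) = m} = {j0} := by
        ext j
        simp only [Set.mem_setOf_eq, Set.mem_singleton_iff]
        exact ⟨fun h => hinj j j0 (by rw [h, hj0]), fun h => by rw [h, hj0]⟩
      show ((Module.finrank k (M.grading m ⊓ U : Submodule k M.carrier)) : ℤ) = 1
      rw [HU m, hset, Set.image_singleton, finrank_span_singleton (hfne j0)]
      norm_num
    have hUdim0 : ∀ m : ZMod n, r ≤ (m - i').val → M.subDim U m = 0 := by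
      intro m hm
      have hset : {j : Fin r | i - ((j : ℕ) : ZMod n) = m} = ∅ := by
        ext j
        simp only [Set.mem_setOf_eq, Set.mem_empty_iff_false, iff_false]
        intro h
        have := hjform j
        rw [h] at this
        omega
      show ((Module.finrank k (M.grading m ⊓ U : Submodule k M.carrier)) : ℤ) = 0
      rw [HU m, hset, Set.image_empty]
      simp
    -- finrank of K-pieces
    have hKrank1 : ∀ m : ZMod n, (m - i').val < r →
        Module.finrank k (M.grading m ⊓ K : Submodule k M.carrier) + 1
          = Module.finrank k (M.grading m) := by
      intro m hm
      set μ := (m - i').val with hμdef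
      set ψ : M.carrier →ₗ[k] k := ξ ∘ₗ (M.t ^ μ) with hψdef
      set φm : M.grading m →ₗ[k] k := ψ ∘ₗ (M.grading m).subtype with hφmdef
      have h1 := LinearMap.finrank_range_add_finrank_ker φm
      have hker : LinearMap.ker φm = Submodule.comap (M.grading m).subtype (LinearMap.ker ψ) := by
        rw [hφmdef, LinearMap.ker_comp]
      have hkerrank : Module.finrank k (M.grading m ⊓ K : Submodule k M.carrier)
          = Module.finrank k (LinearMap.ker φm) := by
        rw [hon m hm, hker, ← Submodule.map_comap_subtype, Submodule.finrank_map_subtype_eq]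
      -- the functional is nonzero on this graded piece
      set w : M.carrier := (M.t ^ (r - 1 - μ)) x with hwdef
      have hwg : w ∈ M.grading m := by
        have := M.pow_mem_grading hxg (r - 1 - μ)
        rwa [hmform m hm] at this
      have hφw : φm ⟨w, hwg⟩ ≠ 0 := by
        have he : μ + (r - 1 - μ) = r - 1 := by omega
        have h2 : (M.t ^ μ) w = v := by
          rw [hwdef, hpow, he]
        have h3 : φm ⟨w, hwg⟩ = ξ ((M.t ^ μ) w) := rfl
        rw [h3, h2]
        exact hξv
      have hrange : Module.finrank k (LinearMap.range φm) = 1 := by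
        have hle : Module.finrank k (LinearMap.range φm) ≤ 1 := by
          have := Submodule.finrank_le (LinearMap.range φm)
          rwa [Module.finrank_self] at this
        have hne : LinearMap.range φm ≠ ⊥ := by
          intro h
          have : φm ⟨w, hwg⟩ ∈ (⊥ : Submodule k k) := h ▸ LinearMap.mem_range_self _ _
          exact hφw ((Submodule.mem_bot k).mp this)
        have h0 : Module.finrank k (LinearMap.range φm) ≠ 0 := by
          intro h
          exact hne (Submodule.finrank_eq_zero.mp h)
        omega
      rw [hkerrank, ← h1, hrange]
      omega
    -- properness of U and W
    have hx0 : x ≠ 0 := by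
      intro h
      apply hv
      rw [hvdef, h, map_zero]
    have hU0 : U ≠ ⊥ := by
      intro h
      have hxU : x ∈ U := Submodule.subset_span ⟨⟨0, hrpos⟩, by simp [hfdef]⟩
      rw [h] at hxU
      exact hx0 ((Submodule.mem_bot k).mp hxU)
    have hW1 : W ≠ ⊤ := by
      intro h
      have hxW : x ∈ M.grading i ⊓ W := Submodule.mem_inf.mpr ⟨hxg, by rw [h]; trivial⟩
      rw [hWinf i] at hxW
      have hxK := (Submodule.mem_inf.mp hxW).2
      have h5 := (mem_K x).mp hxK ⟨r - 1, by omega⟩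
      apply hξv
      rw [hvdef]
      exact h5
    by_cases hW0 : W = ⊥
    · have hKbot : ∀ m : ZMod n, M.grading m ⊓ K = ⊥ := by
        intro m
        have h1 : M.grading m ⊓ K ≤ W := le_iSup (fun j => M.grading j ⊓ K) m
        rw [hW0] at h1
        exact le_bot_iff.mp h1
      have hdimeq : M.subDim U = M.dim := by
        funext m
        by_cases hm : (m - i').val < r
        · have h2 := hKrank1 m hm
          rw [hKbot m] at h2
          rw [finrank_bot] at h2
          rw [hUdim1 m hm]
          simp only [NilpRep.dim]
          omega
        · have h3 : M.grading m ≤ K := hoff m (by omega)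
          have h4 : M.grading m = ⊥ := by
            rw [← hKbot m]
            exact le_antisymm (le_inf le_rfl h3) inf_le_left
          rw [hUdim0 m (by omega)]
          simp only [NilpRep.dim]
          rw [h4, finrank_bot]
          norm_num
      have hlt := hM.2 U hUsub hU0 hUtop
      rw [hdimeq] at hlt
      exact lt_irrefl _ hlt
    · refine no_comp hZ hM hUsub hWsub hU0 hUtop hW0 hW1 ?_
      intro m
      have hWd : M.subDim W m
          = (Module.finrank k (M.grading m ⊓ K : Submodule k M.carrier) : ℤ) := by
        show ((Module.finrank k (M.grading m ⊓ W : Submodule k M.carrier)) : ℤ) = _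
        rw [hWinf m]
      by_cases hm : (m - i').val < r
      · have h2 := hKrank1 m hm
        rw [hUdim1 m hm, hWd]
        simp only [NilpRep.dim]
        omega
      · have h3 : M.grading m ≤ K := hoff m (by omega)
        have h4 : M.grading m ⊓ K = M.grading m := inf_eq_left.mpr h3
        rw [hUdim0 m (by omega), hWd, h4]
        simp only [NilpRep.dim]
        norm_num


lemma spec_repIso {i : ZMod n} {r : ℕ} {M N : NilpRep k n}
    (hM : Spec i r M) (hN : Spec i r N) : NilpRep.RepIso M N := by
  obtain ⟨hlenM, x, hxr, hliM, hgM⟩ := hM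
  obtain ⟨hlenN, y, hyr, hliN, hgN⟩ := hN
  set fM : Fin r → M.carrier := fun j => (M.t ^ (j : ℕ)) x with hfMdef
  set fN : Fin r → N.carrier := fun j => (N.t ^ (j : ℕ)) y with hfNdef
  have hspanM : ⊤ ≤ Submodule.span k (Set.range fM) := by
    rw [← M.total]
    refine iSup_le fun m => ?_
    rw [hgM m]
    exact Submodule.span_mono (Set.image_subset_range _ _)
  have hspanN : ⊤ ≤ Submodule.span k (Set.range fN) := by
    rw [← N.total]
    refine iSup_le fun m => ?_
    rw [hgN m]
    exact Submodule.span_mono (Set.image_subset_range _ _)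
  set bM : Module.Basis (Fin r) k M.carrier := Module.Basis.mk hliM hspanM with hbMdef
  set bN : Module.Basis (Fin r) k N.carrier := Module.Basis.mk hliN hspanN with hbNdef
  set e : M.carrier ≃ₗ[k] N.carrier := bM.equiv bN (Equiv.refl _) with hedef
  have hbM : ∀ j, bM j = fM j := fun j => by rw [hbMdef, Module.Basis.mk_apply]
  have hbN : ∀ j, bN j = fN j := fun j => by rw [hbNdef, Module.Basis.mk_apply]
  have hefM : ∀ j, e (fM j) = fN j := by
    intro j
    rw [← hbM j, hedef, Module.Basis.equiv_apply, Equiv.refl_apply, hbN j]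
  refine ⟨e, ?_, ?_⟩
  · have hext : (↑e : M.carrier →ₗ[k] N.carrier) ∘ₗ M.t = N.t ∘ₗ (↑e : M.carrier →ₗ[k] N.carrier) := by
      refine Module.Basis.ext bM fun j => ?_
      have hMstep : M.t (fM j) = (M.t ^ ((j : ℕ) + 1)) x := by
        rw [hfMdef]
        simp only []
        rw [← Module.End.mul_apply, ← pow_succ']
      have hNstep : N.t (fN j) = (N.t ^ ((j : ℕ) + 1)) y := by
        rw [hfNdef]
        simp only []
        rw [← Module.End.mul_apply, ← pow_succ']
      simp only [LinearMap.comp_apply, LinearEquiv.coe_coe]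
      rw [hbM j, hMstep, hefM j, hNstep]
      by_cases hjr : (j : ℕ) + 1 < r
      · have h1 : (M.t ^ ((j : ℕ) + 1)) x = fM ⟨(j : ℕ) + 1, hjr⟩ := rfl
        have h2 : (N.t ^ ((j : ℕ) + 1)) y = fN ⟨(j : ℕ) + 1, hjr⟩ := rfl
        rw [h1, h2, hefM ⟨(j : ℕ) + 1, hjr⟩]
      · have hjr' : (j : ℕ) + 1 = r := by have := j.isLt; omega
        rw [hjr', hxr, hyr, map_zero]
    intro z
    exact DFunLike.congr_fun hext z
  · intro m
    rw [hgM m, Submodule.map_span, hgN m]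
    congr 1
    rw [← Set.image_comp]
    exact Set.image_congr fun j _ => hefM j


/-- Every `Z`-stable object of `𝒯ₙ` has length at most `n`, and there are only finitely
many stable objects up to isomorphism. -/
theorem stmt_6 (k : Type) [Field k] (n : ℕ) [NeZero n]
    (Z : (ZMod n → ℤ) → ℂ) (hZ : IsStabilityFunction n Z) :
    (∀ M : NilpRep k n, IsStable Z M → M.length ≤ n) ∧
    ∃ L : List (NilpRep k n), ∀ M : NilpRep k n, IsStable Z M →
      ∃ N ∈ L, NilpRep.RepIso M N := by
  constructor
  · intro M hM
    obtain ⟨i, r, hr1, hrn, hspec⟩ := stable_spec hZ hM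
    rw [hspec.1]
    exact hrn
  · classical
    refine ⟨(Finset.univ : Finset (ZMod n × Fin n)).toList.filterMap
      (fun p => if h : ∃ N : NilpRep k n, IsStable Z N ∧ Spec p.1 ((p.2 : ℕ) + 1) N
        then some h.choose else none), ?_⟩
    intro M hM
    obtain ⟨i, r, hr1, hrn, hspec⟩ := stable_spec hZ hM
    have hrfin : r - 1 < n := by omega
    set p : ZMod n × Fin n := (i, ⟨r - 1, hrfin⟩) with hpdef
    have hre : ((p.2 : ℕ) + 1) = r := by
      rw [hpdef]
      simp
      omega
    have hex : ∃ N : NilpRep k n, IsStable Z N ∧ Spec p.1 ((p.2 : ℕ) + 1) N := by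
      refine ⟨M, hM, ?_⟩
      rw [hre]
      exact hspec
    refine ⟨hex.choose, ?_, ?_⟩
    · apply List.mem_filterMap.mpr
      exact ⟨p, by simp, by rw [dif_pos hex]⟩
    · have hs := hex.choose_spec.2
      have hs' : Spec i r hex.choose := by rw [← hre]; exact hs
      exact spec_repIso hspec hs'
end

section
/- Let Z be a stability function on 𝒯ₙ. Then at most one stable object (up to isomorphism) has dimension vector δ = (1, 1, …, 1). -/
variable {k : Type} [Field k] {n : ℕ} [NeZero n]

/-- A stability function is discrete if distinct (non-isomorphic) stable objects have
distinct phases. -/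
def IsDiscreteStability (k : Type) [Field k] {n : ℕ} [NeZero n] (Z : (ZMod n → ℤ) → ℂ) : Prop :=
  ∀ M N : NilpRep k n, IsStable Z M → IsStable Z N →
    (Z M.dim).arg = (Z N.dim).arg → NilpRep.RepIso M N

section Aux

open Submodule Module

lemma zmod_val_sub_one {y : ZMod n} (hy : y ≠ 0) : (y - 1).val = y.val - 1 := by
  have h1 : 1 ≤ y.val := Nat.one_le_iff_ne_zero.2 (by
    simpa [ZMod.val_eq_zero] using hy)
  have h2 : y.val - 1 < n := lt_of_le_of_lt (Nat.sub_le _ _) (ZMod.val_lt y)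
  have : (y - 1 : ZMod n) = ((y.val - 1 : ℕ) : ZMod n) := by
    push_cast [Nat.cast_sub h1]
    simp [ZMod.natCast_val, ZMod.cast_id]
  rw [this, ZMod.val_cast_of_lt h2]

lemma arg_sum_contra (z w : ℂ) (hz : z ≠ 0) (hw : w ≠ 0)
    (h0z : 0 ≤ z.arg) (h0w : 0 ≤ w.arg)
    (hlt1 : z.arg < (z + w).arg) (hlt2 : w.arg < (z + w).arg)
    (hπ : (z + w).arg < Real.pi) : False := by
  set θ := (z + w).arg with hθ
  have key : ∀ u : ℂ, u ≠ 0 → 0 ≤ u.arg → u.arg < θ →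
      (u * Complex.exp (-(θ : ℂ) * Complex.I)).im < 0 := by
    intro u hu h0 hlt
    conv_lhs => rw [← Complex.norm_mul_exp_arg_mul_I u]
    rw [mul_assoc, ← Complex.exp_add]
    have he : (↑u.arg * Complex.I + -(θ:ℂ) * Complex.I) = ↑(u.arg - θ) * Complex.I := by
      push_cast; ring
    rw [he]
    have him : ((‖u‖ : ℂ) * Complex.exp (↑(u.arg - θ) * Complex.I)).im
        = ‖u‖ * Real.sin (u.arg - θ) := by
      simp only [Complex.mul_im, Complex.exp_ofReal_mul_I_im, Complex.ofReal_re,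
        Complex.ofReal_im, zero_mul, add_zero]
    rw [him]
    have hsin : Real.sin (u.arg - θ) < 0 := by
      apply Real.sin_neg_of_neg_of_neg_pi_lt
      · linarith
      · linarith
    have habs : 0 < ‖u‖ := by simpa using hu
    exact mul_neg_of_pos_of_neg habs hsin
  have hzw : ((z + w) * Complex.exp (-(θ:ℂ) * Complex.I)).im = 0 := by
    conv_lhs => rw [← Complex.norm_mul_exp_arg_mul_I (z + w)]
    rw [mul_assoc, ← Complex.exp_add]
    have he : (↑(z+w).arg * Complex.I + -(θ:ℂ) * Complex.I) = ↑((0:ℝ)) * Complex.I := by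
      rw [← hθ]; push_cast; ring
    rw [he]
    simp only [Complex.mul_im, Complex.exp_ofReal_mul_I_im, Complex.ofReal_re,
      Complex.ofReal_im, zero_mul, add_zero, Real.sin_zero, mul_zero]
  have hdistrib : ((z + w) * Complex.exp (-(θ:ℂ) * Complex.I)).im
      = (z * Complex.exp (-(θ:ℂ) * Complex.I)).im + (w * Complex.exp (-(θ:ℂ) * Complex.I)).im := by
    rw [add_mul, Complex.add_im]
  have h1 := key z hz h0z hlt1
  have h2 := key w hw h0w hlt2
  rw [hdistrib] at hzw
  linarith

namespace NilpRep

lemma exists_vc (M : NilpRep k n) (hM : M.dim = fun _ => 1) :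
    ∃ (v : ZMod n → M.carrier) (c : ZMod n → k),
      (∀ i, v i ≠ 0) ∧ (∀ i, M.grading i = span k {v i}) ∧
      (∀ i, M.t (v i) = c i • v (i - 1)) := by
  have hfin : ∀ i, finrank k (M.grading i) = 1 := by
    intro i
    have := congrFun hM i
    simpa [NilpRep.dim] using this
  have hgen : ∀ i : ZMod n, ∃ v : M.carrier, v ≠ 0 ∧ M.grading i = span k {v} := by
    intro i
    have h1 : 0 < finrank k (M.grading i) := by rw [hfin i]; norm_num
    have : Nontrivial (M.grading i) := Module.nontrivial_of_finrank_pos h1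
    obtain ⟨u, hu⟩ := exists_ne (0 : M.grading i)
    refine ⟨(u : M.carrier), by simpa using hu, ?_⟩
    have hall : ∀ w : M.grading i, ∃ a : k, a • u = w :=
      (finrank_eq_one_iff_of_nonzero' u hu).1 (hfin i)
    apply le_antisymm
    · intro x hx
      obtain ⟨a, ha⟩ := hall ⟨x, hx⟩
      rw [Submodule.mem_span_singleton]
      exact ⟨a, congrArg Subtype.val ha⟩
    · rw [Submodule.span_singleton_le_iff_mem]; exact u.2
  choose v hv0 hvspan using hgen
  have hc : ∀ i : ZMod n, ∃ c : k, M.t (v i) = c • v (i - 1) := by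
    intro i
    have h1 : M.t (v i) ∈ M.grading (i - 1) := by
      apply M.maps i
      exact Submodule.mem_map_of_mem (by rw [hvspan i]; exact Submodule.mem_span_singleton_self _)
    rw [hvspan (i - 1), Submodule.mem_span_singleton] at h1
    obtain ⟨a, ha⟩ := h1
    exact ⟨a, ha.symm⟩
  choose c hcv using hc
  exact ⟨v, c, hv0, hvspan, hcv⟩

lemma exists_zero (M : NilpRep k n) (v : ZMod n → M.carrier) (c : ZMod n → k)
    (hv0 : ∀ i, v i ≠ 0) (hcv : ∀ i, M.t (v i) = c i • v (i - 1)) :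
    ∃ a, c a = 0 := by
  by_contra h
  push_neg at h
  have key : ∀ m : ℕ, ∃ d : k, d ≠ 0 ∧ (M.t ^ m) (v 0) = d • v (0 - (m : ZMod n)) := by
    intro m
    induction m with
    | zero => exact ⟨1, one_ne_zero, by simp⟩
    | succ m ih =>
      obtain ⟨d, hd, hdm⟩ := ih
      refine ⟨d * c (0 - (m : ZMod n)), mul_ne_zero hd (h _), ?_⟩
      have : (M.t ^ (m + 1)) (v 0) = M.t ((M.t ^ m) (v 0)) := by
        rw [pow_succ', Module.End.mul_apply]
      rw [this, hdm, map_smul, hcv]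
      rw [smul_smul]
      congr 1
      push_cast
      ring
  obtain ⟨N, hN⟩ := M.nilpotent
  obtain ⟨d, hd, hdm⟩ := key N
  rw [hN] at hdm
  simp only [LinearMap.zero_apply] at hdm
  rcases smul_eq_zero.1 hdm.symm with h1 | h2
  · exact hd h1
  · exact hv0 _ h2

lemma arc_subrep (M : NilpRep k n) (hM : M.dim = fun _ => 1)
    (v : ZMod n → M.carrier) (c : ZMod n → k)
    (hv0 : ∀ i, v i ≠ 0) (hvspan : ∀ i, M.grading i = span k {v i})
    (hcv : ∀ i, M.t (v i) = c i • v (i - 1))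
    (a : ZMod n) (ha : c a = 0) (d : ℕ) (hd1 : 1 ≤ d) (hdn : d < n) :
    ∃ U : Submodule k M.carrier, M.IsSubRep U ∧ U ≠ ⊥ ∧ U ≠ ⊤ ∧
      M.subDim U = fun x => if (x - a).val < d then 1 else 0 := by
  set U : Submodule k M.carrier := ⨆ x : ZMod n, ⨆ _ : (x - a).val < d, M.grading x with hU
  have hle : ∀ x : ZMod n, (x - a).val < d → M.grading x ≤ U := fun x hx =>
    le_iSup_of_le x (le_iSup_of_le hx le_rfl)
  have hclosure : ∀ x : ZMod n, (x - a).val < d → c x ≠ 0 → ((x - 1) - a).val < d := by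
    intro x hx hcx
    have hxa : x ≠ a := fun h => hcx (h ▸ ha)
    have hne : x - a ≠ 0 := sub_ne_zero.2 hxa
    have hv1 : (x - a).val ≠ 0 := by simpa [ZMod.val_eq_zero] using hne
    have h1 : (x - a - 1).val = (x - a).val - 1 := zmod_val_sub_one hne
    have h2 : (x - 1 - a) = (x - a - 1) := by ring
    rw [h2, h1]
    omega
  have hinf : ∀ i : ZMod n,
      (M.grading i ⊓ U) = if (i - a).val < d then M.grading i else ⊥ := by
    intro i
    by_cases hi : (i - a).val < d
    · rw [if_pos hi, inf_eq_left]; exact hle i hi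
    · rw [if_neg hi]
      have hUle : U ≤ ⨆ j, ⨆ _ : j ≠ i, M.grading j := by
        apply iSup_le; intro x; apply iSup_le; intro hx
        have hxi : x ≠ i := fun h => hi (h ▸ hx)
        exact le_iSup_of_le x (le_iSup_of_le hxi le_rfl)
      exact ((M.indep i).mono_right hUle).eq_bot
  have hmapbot : ∀ x : ZMod n, c x = 0 → (M.grading x).map M.t = ⊥ := by
    intro x hcx
    rw [hvspan x, Submodule.map_span, Set.image_singleton, hcv x, hcx, zero_smul,
      Submodule.span_zero_singleton]
  have hsub : M.IsSubRep U := by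
    constructor
    · rw [hU, Submodule.map_iSup]
      apply iSup_le; intro x
      rw [Submodule.map_iSup]
      apply iSup_le; intro hx
      by_cases hcx : c x = 0
      · rw [hmapbot x hcx]; exact bot_le
      · exact le_trans (M.maps x) (hle (x - 1) (hclosure x hx hcx))
    · apply le_antisymm
      · exact iSup_le fun i => inf_le_right
      · apply iSup_le; intro x; apply iSup_le; intro hx
        have : M.grading x = M.grading x ⊓ U := by rw [hinf x, if_pos hx]
        rw [this]
        exact le_iSup (fun i => M.grading i ⊓ U) x
  have hva : v a ∈ U := by
    apply hle a (by simp only [sub_self, ZMod.val_zero]; omega)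
    rw [hvspan a]; exact Submodule.mem_span_singleton_self _
  have hUbot : U ≠ ⊥ := by
    intro h
    rw [h] at hva
    exact hv0 a (by simpa using hva)
  have hUtop : U ≠ ⊤ := by
    intro h
    have hi : ¬ ((a + (d : ZMod n) - a).val < d) := by
      have : (a + (d : ZMod n) - a) = (d : ZMod n) := by ring
      rw [this, ZMod.val_cast_of_lt hdn]
      omega
    have := hinf (a + (d : ZMod n))
    rw [if_neg hi, h, inf_top_eq] at this
    apply hv0 (a + (d : ZMod n))
    have hmem : v (a + (d : ZMod n)) ∈ M.grading (a + (d : ZMod n)) := by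
      rw [hvspan]; exact Submodule.mem_span_singleton_self _
    rw [this] at hmem
    simpa using hmem
  refine ⟨U, hsub, hUbot, hUtop, ?_⟩
  funext x
  simp only [NilpRep.subDim]
  rw [hinf x]
  by_cases hx : (x - a).val < d
  · rw [if_pos hx, if_pos hx]
    have := congrFun hM x
    simpa [NilpRep.dim] using this
  · rw [if_neg hx, if_neg hx]
    simp [finrank_bot]

lemma arc_partition (a b : ZMod n) (hab : a ≠ b) (x : ZMod n) :
    ((if (x - a).val < (b - a).val then (1:ℤ) else 0)
      + (if (x - b).val < n - (b - a).val then (1:ℤ) else 0)) = 1 := by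
  set d := (b - a).val with hd
  have hdn : d < n := ZMod.val_lt _
  have hd1 : 1 ≤ d := by
    have hne : b - a ≠ 0 := sub_ne_zero.2 (Ne.symm hab)
    have : d ≠ 0 := by simpa [hd, ZMod.val_eq_zero] using hne
    omega
  have hba : ((d : ℕ) : ZMod n) = b - a := by
    simp [hd, ZMod.natCast_val, ZMod.cast_id]
  set u := (x - a).val with hu'
  have hun : u < n := ZMod.val_lt _
  have hxa : ((u : ℕ) : ZMod n) = x - a := by
    simp [hu', ZMod.natCast_val, ZMod.cast_id]
  by_cases hu : u < d
  · have hxb : (x - b) = ((u + (n - d) : ℕ) : ZMod n) := by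
      have h1 : ((u + (n - d) : ℕ) : ZMod n)
          = (u : ZMod n) + ((n : ℕ) : ZMod n) - ((d : ℕ) : ZMod n) := by
        push_cast [Nat.cast_sub hdn.le]
        ring
      rw [h1, ZMod.natCast_self, hxa, hba]
      ring
    have hval : (x - b).val = u + (n - d) := by
      rw [hxb, ZMod.val_cast_of_lt (by omega)]
    rw [if_pos hu, if_neg (by omega)]
    norm_num
  · have hxb : (x - b) = ((u - d : ℕ) : ZMod n) := by
      have h1 : ((u - d : ℕ) : ZMod n) = (u : ZMod n) - ((d : ℕ) : ZMod n) := by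
        push_cast [Nat.cast_sub (le_of_not_gt hu)]
        ring
      rw [h1, hxa, hba]
      ring
    have hval : (x - b).val = u - d := by
      rw [hxb, ZMod.val_cast_of_lt (by omega)]
    rw [if_neg hu, if_pos (by omega)]
    norm_num

lemma zeros_eq (Z : (ZMod n → ℤ) → ℂ) (hZ : IsStabilityFunction n Z)
    (M N : NilpRep k n) (hMs : IsStable Z M) (hNs : IsStable Z N)
    (hMd : M.dim = fun _ => 1) (hNd : N.dim = fun _ => 1)
    (vM : ZMod n → M.carrier) (cM : ZMod n → k)
    (hv0M : ∀ i, vM i ≠ 0) (hvspanM : ∀ i, M.grading i = span k {vM i})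
    (hcvM : ∀ i, M.t (vM i) = cM i • vM (i - 1))
    (vN : ZMod n → N.carrier) (cN : ZMod n → k)
    (hv0N : ∀ i, vN i ≠ 0) (hvspanN : ∀ i, N.grading i = span k {vN i})
    (hcvN : ∀ i, N.t (vN i) = cN i • vN (i - 1))
    (a b : ZMod n) (ha : cM a = 0) (hb : cN b = 0) : a = b := by
  by_contra hab
  set d := (b - a).val with hd
  have hdn : d < n := ZMod.val_lt _
  have hd1 : 1 ≤ d := by
    have hne : b - a ≠ 0 := sub_ne_zero.2 (Ne.symm hab)
    have : d ≠ 0 := by simpa [hd, ZMod.val_eq_zero] using hne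
    omega
  obtain ⟨U, hUsub, hUbot, hUtop, hUdim⟩ :=
    arc_subrep M hMd vM cM hv0M hvspanM hcvM a ha d hd1 hdn
  obtain ⟨V, hVsub, hVbot, hVtop, hVdim⟩ :=
    arc_subrep N hNd vN cN hv0N hvspanN hcvN b hb (n - d) (by omega) (by omega)
  have hfarg := hMs.2 U hUsub hUbot hUtop
  have hgarg := hNs.2 V hVsub hVbot hVtop
  rw [hNd, ← hMd] at hgarg
  have hsum : M.subDim U + N.subDim V = M.dim := by
    funext x
    rw [hMd]
    simp only [Pi.add_apply, hUdim, hVdim]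
    exact arc_partition a b hab x
  have hZsum : Z (M.dim) = Z (M.subDim U) + Z (N.subDim V) := by
    rw [← hsum]
    exact hZ.1 _ _
  have hfpos := hZ.2 (M.subDim U) (by
      intro i; rw [hUdim]; dsimp only; split <;> norm_num)
    (by
      intro h
      have := congrFun h a
      rw [hUdim] at this
      simp only [sub_self, ZMod.val_zero, Pi.zero_apply] at this
      rw [if_pos (by omega)] at this
      norm_num at this)
  have hgpos := hZ.2 (N.subDim V) (by
      intro i; rw [hVdim]; dsimp only; split <;> norm_num)
    (by
      intro h
      have := congrFun h b
      rw [hVdim] at this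
      simp only [sub_self, ZMod.val_zero, Pi.zero_apply] at this
      rw [if_pos (by omega)] at this
      norm_num at this)
  have hdpos := hZ.2 M.dim (by intro i; rw [hMd]; norm_num) hMs.1
  apply arg_sum_contra (Z (M.subDim U)) (Z (N.subDim V)) hfpos.1 hgpos.1
    hfpos.2.1 hgpos.2.1
  · rw [← hZsum]; exact hfarg
  · rw [← hZsum]; exact hgarg
  · rw [← hZsum]; exact hdpos.2.2

lemma mk_basis (M : NilpRep k n) (v : ZMod n → M.carrier)
    (hv0 : ∀ i, v i ≠ 0) (hvspan : ∀ i, M.grading i = span k {v i}) :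
    ∃ b : Basis (ZMod n) k M.carrier, ∀ i, b i = v i := by
  have hind : LinearIndependent k v := by
    apply iSupIndep.linearIndependent M.grading M.indep
    · intro i
      rw [hvspan i]
      exact Submodule.mem_span_singleton_self _
    · exact hv0
  have hsp : ⊤ ≤ span k (Set.range v) := by
    rw [← M.total]
    apply iSup_le
    intro i
    rw [hvspan i]
    exact Submodule.span_mono (Set.singleton_subset_iff.2 ⟨i, rfl⟩)
  exact ⟨Basis.mk hind hsp, fun i => Basis.mk_apply hind hsp i⟩

end NilpRep


end Aux

/-- For any stability function `Z` on `𝒯ₙ`, at most one stable object (up to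
isomorphism) has dimension vector `δ = (1,…,1)`. -/
theorem stmt_7 (k : Type) [Field k] (n : ℕ) [NeZero n]
    (Z : (ZMod n → ℤ) → ℂ) (hZ : IsStabilityFunction n Z) :
    ∀ M N : NilpRep k n, IsStable Z M → IsStable Z N →
      M.dim = (fun _ => 1) → N.dim = (fun _ => 1) → NilpRep.RepIso M N := by
  intro M N hMs hNs hMd hNd
  obtain ⟨v, c, hv0, hvspan, hcv⟩ := NilpRep.exists_vc M hMd
  obtain ⟨w, c', hw0, hwspan, hcw⟩ := NilpRep.exists_vc N hNd
  obtain ⟨a, ha⟩ := NilpRep.exists_zero M v c hv0 hcv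
  obtain ⟨b, hb⟩ := NilpRep.exists_zero N w c' hw0 hcw
  have hab : a = b := NilpRep.zeros_eq Z hZ M N hMs hNs hMd hNd
    v c hv0 hvspan hcv w c' hw0 hwspan hcw a b ha hb
  subst hab
  have hcM : ∀ i, i ≠ a → c i ≠ 0 := fun i hi hci =>
    hi (NilpRep.zeros_eq Z hZ M M hMs hMs hMd hMd
      v c hv0 hvspan hcv v c hv0 hvspan hcv i a hci ha)
  have hcN : ∀ i, i ≠ a → c' i ≠ 0 := fun i hi hci =>
    hi (NilpRep.zeros_eq Z hZ N N hNs hNs hNd hNd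
      w c' hw0 hwspan hcw w c' hw0 hwspan hcw i a hci hb)
  -- the rescaling scalars
  set q : ℕ → k := fun l => c (a + (l : ZMod n) + 1) / c' (a + (l : ZMod n) + 1) with hq'
  set lam : ZMod n → k := fun x => ∏ l ∈ Finset.range ((x - a).val), q l with hlam'
  have hqne : ∀ l : ℕ, l + 1 < n → q l ≠ 0 := by
    intro l hl
    have hne : a + (l : ZMod n) + 1 ≠ a := by
      intro h
      have h2 : ((l + 1 : ℕ) : ZMod n) = 0 := by
        push_cast
        linear_combination h
      rw [ZMod.natCast_eq_zero_iff] at h2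
      have := Nat.le_of_dvd (by omega) h2
      omega
    exact div_ne_zero (hcM _ hne) (hcN _ hne)
  have hlamne : ∀ x, lam x ≠ 0 := by
    intro x
    rw [hlam']
    apply Finset.prod_ne_zero_iff.2
    intro l hl
    rw [Finset.mem_range] at hl
    have := ZMod.val_lt (x - a)
    exact hqne l (by omega)
  -- commutation identity
  have hcomm : ∀ i : ZMod n, c i * lam (i - 1) = lam i * c' i := by
    intro i
    by_cases hia : i = a
    · subst hia
      rw [ha, hb]
      ring
    · have hine : i - a ≠ 0 := sub_ne_zero.2 hia
      have hm0 : (i - a).val ≠ 0 := by simpa [ZMod.val_eq_zero] using hine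
      obtain ⟨m, hm⟩ : ∃ m : ℕ, (i - a).val = m + 1 := ⟨(i - a).val - 1, by omega⟩
      have h2 : (i - 1 - a) = (i - a - 1) := by ring
      have hl1 : lam (i - 1) = ∏ l ∈ Finset.range m, q l := by
        show (∏ l ∈ Finset.range ((i - 1 - a).val), q l) = _
        rw [h2, zmod_val_sub_one hine, hm]
        simp
      have hl2 : lam i = (∏ l ∈ Finset.range m, q l) * q m := by
        show (∏ l ∈ Finset.range ((i - a).val), q l) = _
        rw [hm, Finset.prod_range_succ]
      have hqm : q m = c i / c' i := by
        have hidx : a + ((m : ℕ) : ZMod n) + 1 = i := by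
          have h3 : (((m : ℕ)) : ZMod n) + 1 = (((i - a).val : ℕ) : ZMod n) := by
            rw [hm]
            push_cast
            ring
          have h4 : (((i - a).val : ℕ) : ZMod n) = i - a := by
            simp [ZMod.natCast_val, ZMod.cast_id]
          rw [add_assoc, h3, h4]
          ring
        show c (a + ((m : ℕ) : ZMod n) + 1) / c' (a + ((m : ℕ) : ZMod n) + 1) = _
        rw [hidx]
      rw [hl1, hl2, hqm]
      field_simp [hcN i hia]
  -- bases and the isomorphism
  obtain ⟨bM, hbM⟩ := NilpRep.mk_basis M v hv0 hvspan
  obtain ⟨bN, hbN⟩ := NilpRep.mk_basis N w hw0 hwspan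
  set u : ZMod n → kˣ := fun i => Units.mk0 (lam i) (hlamne i) with hu'
  set bN' := bN.unitsSMul u with hbN''
  set e : M.carrier ≃ₗ[k] N.carrier := bM.equiv bN' (Equiv.refl _) with he'
  have hev : ∀ i, e (v i) = lam i • w i := by
    intro i
    rw [← hbM i]
    rw [he', Module.Basis.equiv_apply, Equiv.refl_apply, hbN'', Module.Basis.unitsSMul_apply, Units.smul_def,
      hu', hbN i]
    rfl
  have het : ∀ x, e (M.t x) = N.t (e x) := by
    have heq : (e.toLinearMap.comp M.t) = (N.t.comp e.toLinearMap) := by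
      apply Module.Basis.ext bM
      intro i
      simp only [LinearMap.comp_apply, LinearEquiv.coe_coe, hbM i]
      rw [hcv i, map_smul, hev (i - 1), hev i, map_smul, hcw i, smul_smul, smul_smul, hcomm i]
    intro x
    exact LinearMap.congr_fun heq x
  refine ⟨e, het, ?_⟩
  intro i
  rw [hvspan i, Submodule.map_span, Set.image_singleton]
  simp only [LinearEquiv.coe_coe]
  rw [hev i, hwspan i]
  exact Submodule.span_singleton_smul_eq (IsUnit.mk0 _ (hlamne i)) _
end

section
/- The category 𝒯ₙ of nilpotent representations of the cyclic quiver (n ≥ 1) admits no completely discrete stability function; that is, for every stability function Z there exists a phase μ such that the subcategory of semistable objects of phase μ is nonzero and not semisimple. -/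
variable {k : Type} [Field k] {n : ℕ} [NeZero n]

section AuxProof
open Complex

def OkC (z : ℂ) : Prop := z ≠ 0 ∧ 0 ≤ z.arg ∧ z.arg < Real.pi

noncomputable def crossC (z w : ℂ) : ℝ := z.re * w.im - z.im * w.re

lemma crossC_eq (z w : ℂ) :
    crossC z w = ‖z‖ * ‖w‖ * Real.sin (w.arg - z.arg) := by
  have hz1 := Complex.norm_mul_cos_arg z
  have hz2 := Complex.norm_mul_sin_arg z
  have hw1 := Complex.norm_mul_cos_arg w
  have hw2 := Complex.norm_mul_sin_arg w
  rw [Real.sin_sub, crossC, ← hz1, ← hz2, ← hw1, ← hw2]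
  ring

lemma arg_le_arg_iff_c {z w : ℂ} (hz : OkC z) (hw : OkC w) :
    z.arg ≤ w.arg ↔ 0 ≤ crossC z w := by
  have hzp : 0 < ‖z‖ := norm_pos_iff.mpr hz.1
  have hwp : 0 < ‖w‖ := norm_pos_iff.mpr hw.1
  rw [crossC_eq]
  constructor
  · intro h
    have : 0 ≤ Real.sin (w.arg - z.arg) :=
      Real.sin_nonneg_of_nonneg_of_le_pi (by linarith [h]) (by linarith [hw.2.2, hz.2.1])
    positivity
  · intro h
    by_contra hlt
    push_neg at hlt
    have hs : Real.sin (w.arg - z.arg) < 0 :=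
      Real.sin_neg_of_neg_of_neg_pi_lt (by linarith) (by linarith [hz.2.2, hw.2.1])
    nlinarith [mul_pos hzp hwp]

lemma arg_lt_arg_iff_c {z w : ℂ} (hz : OkC z) (hw : OkC w) :
    z.arg < w.arg ↔ 0 < crossC z w := by
  rw [← not_le, ← not_le, arg_le_arg_iff_c hw hz]
  constructor
  · intro h
    have h' : crossC w z < 0 := by simpa using h
    simp only [crossC] at *
    linarith
  · intro h hle
    simp only [crossC] at *
    linarith

lemma arg_eq_arg_iff_c {z w : ℂ} (hz : OkC z) (hw : OkC w) :
    z.arg = w.arg ↔ crossC z w = 0 := by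
  rw [le_antisymm_iff, arg_le_arg_iff_c hz hw, arg_le_arg_iff_c hw hz]
  simp only [crossC]
  constructor <;> intro h <;> [linarith [h.1, h.2]; constructor <;> linarith]

lemma arg_le_arg_iff {z w : ℂ} (hz : OkC z) (hw : OkC w) :
    z.arg ≤ w.arg ↔ 0 ≤ (z.re * w.im - z.im * w.re) := arg_le_arg_iff_c hz hw

lemma arg_lt_arg_iff {z w : ℂ} (hz : OkC z) (hw : OkC w) :
    z.arg < w.arg ↔ 0 < (z.re * w.im - z.im * w.re) := arg_lt_arg_iff_c hz hw

lemma arg_eq_arg_iff {z w : ℂ} (hz : OkC z) (hw : OkC w) :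
    z.arg = w.arg ↔ (z.re * w.im - z.im * w.re) = 0 := arg_eq_arg_iff_c hz hw


/-- class of the interval of length `m` with bottom vertex `b` -/
def ccl (n : ℕ) [NeZero n] (b : ZMod n) (m : ℕ) : ZMod n → ℤ :=
  fun i => ∑ s ∈ Finset.range m, if ((b + (s : ZMod n)) = i) then 1 else 0

lemma ccl_nonneg (b : ZMod n) (m : ℕ) : ∀ i, 0 ≤ ccl n b m i := by
  intro i
  apply Finset.sum_nonneg
  intro s _
  split <;> norm_num

lemma ccl_pos (b : ZMod n) {m : ℕ} (hm : 1 ≤ m) : 1 ≤ ccl n b m b := by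
  classical
  have h0 : (0:ℕ) ∈ Finset.range m := Finset.mem_range.mpr hm
  have := Finset.single_le_sum (f := fun s : ℕ => if ((b + (s : ZMod n)) = b) then (1:ℤ) else 0)
    (fun s _ => by by_cases h : (b + (s : ZMod n)) = b <;> simp [h]) h0
  simpa [ccl] using this

lemma ccl_ne_zero (b : ZMod n) {m : ℕ} (hm : 1 ≤ m) : ccl n b m ≠ 0 := by
  intro h
  have := ccl_pos b hm (n := n)
  rw [h] at this
  simp at this

lemma ccl_add (b : ZMod n) (m m' : ℕ) :
    ccl n b (m + m') = ccl n b m + ccl n (b + (m : ZMod n)) m' := by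
  funext i
  show _ = ccl n b m i + ccl n (b + (m : ZMod n)) m' i
  rw [ccl, Finset.sum_range_add]
  congr 1
  apply Finset.sum_congr rfl
  intro s _
  have : b + ((m + s : ℕ) : ZMod n) = b + (m : ZMod n) + (s : ZMod n) := by
    push_cast; ring
  rw [this]

variable (Z : (ZMod n → ℤ) → ℂ)

noncomputable def zcl (b : ZMod n) (m : ℕ) : ℂ := Z (ccl n b m)

lemma zcl_ok (hZ : IsStabilityFunction n Z) (b : ZMod n) {m : ℕ} (hm : 1 ≤ m) : OkC (zcl Z b m) :=
  hZ.2 _ (ccl_nonneg b m) (ccl_ne_zero b hm)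

lemma zcl_add (hZ : IsStabilityFunction n Z) (b : ZMod n) (m m' : ℕ) :
    zcl Z b (m + m') = zcl Z b m + zcl Z (b + (m : ZMod n)) m' := by
  rw [zcl, ccl_add, hZ.1]; rfl

lemma core (hZ : IsStabilityFunction n Z) :
    ∃ (b : ZMod n) (j ℓ : ℕ), 1 ≤ j ∧ j < ℓ ∧
      (zcl Z b j).arg = (zcl Z b ℓ).arg ∧
      ∀ m, 1 ≤ m → m < ℓ → (zcl Z b m).arg ≤ (zcl Z b ℓ).arg := by
  classical
  by_contra hcon
  push_neg at hcon
  have hn : 1 ≤ n := Nat.one_le_iff_ne_zero.mpr (NeZero.ne n)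
  set a : ZMod n → ℕ → ℝ := fun b m => (zcl Z b m).arg with ha
  have hIcc : (Finset.Icc 1 n).Nonempty := ⟨1, Finset.mem_Icc.mpr ⟨le_refl 1, hn⟩⟩
  set μ : ZMod n → ℝ := fun b => (Finset.Icc 1 n).sup' hIcc (a b) with hμ
  -- F1 : all phases bounded by μ b
  have F1 : ∀ b : ZMod n, ∀ m, 1 ≤ m → a b m ≤ μ b := by
    intro b m
    induction m using Nat.strong_induction_on with
    | _ m ih =>
      intro hm
      rcases le_or_gt m n with h | h
      · exact Finset.le_sup' (a b) (Finset.mem_Icc.mpr ⟨hm, h⟩)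
      · -- m > n : zcl b m = zcl b n + zcl b (m - n)
        have hmn : m = n + (m - n) := by omega
        have hr : 1 ≤ m - n := by omega
        have hsplit : zcl Z b m = zcl Z b n + zcl Z b (m - n) := by
          conv_lhs => rw [hmn]
          rw [zcl_add Z hZ]
          congr 2
          simp [ZMod.natCast_self]
        have hokn := zcl_ok Z hZ b hn
        have hokr := zcl_ok Z hZ b hr
        have hokm := zcl_ok Z hZ b hm
        -- seesaw: arg (z+w) ≤ max
        have hseesaw : a b m ≤ a b n ∨ a b m ≤ a b (m - n) := by
          rcases le_or_gt 0 ((zcl Z b (m-n)).re * (zcl Z b n).im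
              - (zcl Z b (m-n)).im * (zcl Z b n).re) with hc | hc
          · left
            show (zcl Z b m).arg ≤ (zcl Z b n).arg
            rw [arg_le_arg_iff hokm hokn, hsplit]
            simp only [Complex.add_re, Complex.add_im]
            nlinarith
          · right
            show (zcl Z b m).arg ≤ (zcl Z b (m - n)).arg
            rw [arg_le_arg_iff hokm hokr, hsplit]
            simp only [Complex.add_re, Complex.add_im]
            nlinarith
        rcases hseesaw with h1 | h1
        · exact le_trans h1 (ih n h hn)
        · exact le_trans h1 (ih (m - n) (by omega) hr)
  -- δ has strictly smaller phase than μ b, for every b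
  have hdelta : ∀ b : ZMod n, a b n < μ b := by
    intro b
    rcases lt_or_ge (a b n) (μ b) with h | h
    · exact h
    · exfalso
      have hμn : μ b = a b n := le_antisymm h (F1 b n hn)
      -- witness : j = n, ℓ = 2n
      have h2n : zcl Z b (n + n) = zcl Z b n + zcl Z b n := by
        rw [zcl_add Z hZ]
        congr 2
        simp [ZMod.natCast_self]
      have hokn := zcl_ok Z hZ b hn
      have hok2n := zcl_ok Z hZ b (by omega : 1 ≤ n + n)
      have heq : a b n = a b (n + n) := by
        rw [ha, arg_eq_arg_iff hokn hok2n, h2n]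
        simp only [Complex.add_re, Complex.add_im]
        ring
      obtain ⟨m, hm1, hm2, hlt⟩ := hcon b n (n + n) hn (by omega) heq
      have : a b m ≤ μ b := F1 b m hm1
      rw [hμn, heq] at this
      exact absurd this (not_le.mpr hlt)
  -- uniqueness of maximizer
  have huniq : ∀ b : ZMod n, ∀ j l : ℕ, 1 ≤ j → j < l → a b j = μ b → a b l ≠ μ b := by
    intro b j l hj hjl hja hla
    obtain ⟨m, hm1, hm2, hlt⟩ := hcon b j l hj hjl (by show a b j = a b l; rw [hla, hja])
    have : a b m ≤ μ b := F1 b m hm1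
    rw [← hla] at this
    exact absurd this (not_le.mpr hlt)
  -- choose maximizer
  have hex : ∀ b : ZMod n, ∃ j, 1 ≤ j ∧ j ≤ n ∧ a b j = μ b := by
    intro b
    obtain ⟨j, hjmem, hje⟩ := Finset.exists_mem_eq_sup' hIcc (a b)
    rw [Finset.mem_Icc] at hjmem
    exact ⟨j, hjmem.1, hjmem.2, hje.symm⟩
  choose jj hj1 hjn hjmax using hex
  -- descent
  have hdesc : ∀ b : ZMod n, μ (b + (jj b : ZMod n)) < μ b := by
    intro b
    set b' := b + (jj b : ZMod n) with hb'
    rw [hμ]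
    rw [Finset.sup'_lt_iff]
    intro m hmmem
    rw [Finset.mem_Icc] at hmmem
    have hm1 := hmmem.1
    -- a b' m < μ b
    have hsum : zcl Z b (jj b + m) = zcl Z b (jj b) + zcl Z b' m := zcl_add Z hZ b (jj b) m
    have hlt : a b (jj b + m) < μ b := by
      have hle := F1 b (jj b + m) (by omega)
      have hne := huniq b (jj b) (jj b + m) (hj1 b) (by omega) (hjmax b)
      exact lt_of_le_of_ne hle hne
    rw [← hjmax b] at hlt
    -- seesaw strict : arg(z + w) < arg z → arg w < arg z
    have hokj := zcl_ok Z hZ b (hj1 b)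
    have hokm := zcl_ok Z hZ b' hm1
    have hokjm := zcl_ok Z hZ b (show 1 ≤ jj b + m by omega)
    have hlt' : (zcl Z b (jj b + m)).arg < (zcl Z b (jj b)).arg := hlt
    rw [arg_lt_arg_iff hokjm hokj, hsum] at hlt'
    show a b' m < μ b
    calc a b' m < a b (jj b) := by
          show (zcl Z b' m).arg < (zcl Z b (jj b)).arg
          rw [arg_lt_arg_iff hokm hokj]
          simp only [Complex.add_re, Complex.add_im] at hlt'
          nlinarith
      _ ≤ μ b := F1 b (jj b) (hj1 b)
  -- iterate
  set σ : ZMod n → ZMod n := fun b => b + (jj b : ZMod n) with hσ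
  have hanti : StrictAnti (fun i : ℕ => μ (σ^[i] 0)) := by
    apply strictAnti_nat_of_succ_lt
    intro i
    rw [Function.iterate_succ_apply']
    exact hdesc _
  obtain ⟨i, j, hne, hij⟩ := Finite.exists_ne_map_eq_of_infinite (fun i : ℕ => σ^[i] (0 : ZMod n))
  exact hne (hanti.injective (congrArg μ hij))

section Mod
variable (k) (ℓ : ℕ)

/-- submodule of vectors supported on `P` -/
def Vsub (P : Fin ℓ → Prop) : Submodule k (Fin ℓ → k) where
  carrier := {x | ∀ r, ¬ P r → x r = 0}
  add_mem' := by
    intro x y hx hy r hr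
    simp [hx r hr, hy r hr]
  zero_mem' := by intro r _; rfl
  smul_mem' := by
    intro c x hx r hr
    simp [hx r hr]

lemma mem_Vsub {P : Fin ℓ → Prop} {x : Fin ℓ → k} :
    x ∈ Vsub k ℓ P ↔ ∀ r, ¬ P r → x r = 0 := Iff.rfl

lemma Vsub_inf (P Q : Fin ℓ → Prop) :
    Vsub k ℓ P ⊓ Vsub k ℓ Q = Vsub k ℓ (fun r => P r ∧ Q r) := by
  ext x
  simp only [Submodule.mem_inf, mem_Vsub]
  constructor
  · rintro ⟨h1, h2⟩ r hr
    by_cases hp : P r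
    · exact h2 r (fun hq => hr ⟨hp, hq⟩)
    · exact h1 r hp
  · intro h
    exact ⟨fun r hp => h r (fun hpq => hp hpq.1), fun r hq => h r (fun hpq => hq hpq.2)⟩

lemma single_mem_Vsub {P : Fin ℓ → Prop} {r : Fin ℓ} (h : P r) (c : k) :
    Pi.single r c ∈ Vsub k ℓ P := by
  intro r' hr'
  have : r' ≠ r := fun he => hr' (he ▸ h)
  rw [Pi.single_eq_of_ne this]

lemma Vsub_ne_bot {P : Fin ℓ → Prop} (r : Fin ℓ) (h : P r) : Vsub k ℓ P ≠ ⊥ := by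
  intro hb
  have h1 : (Pi.single r (1:k) : Fin ℓ → k) ∈ Vsub k ℓ P := single_mem_Vsub k ℓ h 1
  rw [hb, Submodule.mem_bot] at h1
  have := congrFun h1 r
  simp at this

/-- the shift endomorphism -/
def shiftL : (Fin ℓ → k) →ₗ[k] (Fin ℓ → k) where
  toFun x := fun r => if h : (r : ℕ) + 1 < ℓ then x ⟨(r : ℕ) + 1, h⟩ else 0
  map_add' x y := by
    funext r
    by_cases h : (r : ℕ) + 1 < ℓ <;> simp [h]
  map_smul' c x := by
    funext r
    by_cases h : (r : ℕ) + 1 < ℓ <;> simp [h]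

lemma shiftL_apply (x : Fin ℓ → k) (r : Fin ℓ) :
    shiftL k ℓ x r = if h : (r : ℕ) + 1 < ℓ then x ⟨(r : ℕ) + 1, h⟩ else 0 := rfl

lemma shiftL_pow (N : ℕ) (x : Fin ℓ → k) (r : Fin ℓ) :
    (shiftL k ℓ ^ N) x r = if h : (r : ℕ) + N < ℓ then x ⟨(r : ℕ) + N, h⟩ else 0 := by
  induction N generalizing x r with
  | zero => simp
  | succ N ih =>
    rw [pow_succ, Module.End.mul_apply, ih]
    by_cases h : (r : ℕ) + N < ℓ
    · rw [dif_pos h, shiftL_apply]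
      by_cases h2 : (r : ℕ) + N + 1 < ℓ
      · rw [dif_pos h2, dif_pos (show (r:ℕ) + (N+1) < ℓ by omega)]
        congr 1
        all_goals (apply Fin.ext; simp [add_assoc])
      · rw [dif_neg h2, dif_neg (show ¬((r:ℕ) + (N+1) < ℓ) by omega)]
    · rw [dif_neg h, dif_neg (show ¬((r:ℕ) + (N+1) < ℓ) by omega)]

variable {k ℓ} in
lemma sum_single_mem (U : Submodule k (Fin ℓ → k)) (x : Fin ℓ → k)
    (h : ∀ r : Fin ℓ, Pi.single r (x r) ∈ U) : x ∈ U := by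
  have hx : x = ∑ r : Fin ℓ, Pi.single r (x r) := (Finset.univ_sum_single x).symm
  rw [hx]
  exact Submodule.sum_mem U (fun r _ => h r)

def Mrep (b : ZMod n) (hl : 0 < ℓ) : NilpRep k n where
  carrier := Fin ℓ → k
  grading i := Vsub k ℓ (fun r => b + ((r : ℕ) : ZMod n) = i)
  t := shiftL k ℓ
  indep := by
    intro i
    rw [Submodule.disjoint_def]
    intro x hx hx2
    have hle : (⨆ (j) (_ : j ≠ i), Vsub k ℓ (fun r => b + ((r : ℕ) : ZMod n) = j)) ≤
        Vsub k ℓ (fun r => ¬ (b + ((r : ℕ) : ZMod n) = i)) := by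
      apply iSup_le; intro j; apply iSup_le; intro hj
      intro y hy r hr
      rw [not_not] at hr
      exact hy r (fun he => hj (by rw [← he, hr]))
    have hx2' : x ∈ Vsub k ℓ (fun r => ¬ (b + ((r : ℕ) : ZMod n) = i)) := hle hx2
    funext r
    by_cases h : b + ((r : ℕ) : ZMod n) = i
    · exact hx2' r (by simpa using h)
    · exact hx r h
  total := by
    rw [eq_top_iff]
    intro x _
    apply sum_single_mem
    intro r
    exact Submodule.mem_iSup_of_mem (b + ((r : ℕ) : ZMod n))
      (single_mem_Vsub k ℓ (P := fun r' => b + ((r' : ℕ) : ZMod n) = b + ((r : ℕ) : ZMod n))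
        rfl (x r))
  maps := by
    intro i x hx
    obtain ⟨y, hy, rfl⟩ := hx
    intro r hr
    rw [shiftL_apply]
    by_cases h : (r : ℕ) + 1 < ℓ
    · rw [dif_pos h]
      apply hy
      intro he
      apply hr
      have : ((((r:ℕ) + 1 : ℕ)) : ZMod n) = ((r:ℕ) : ZMod n) + 1 := by push_cast; ring
      rw [this] at he
      have : b + ((r:ℕ) : ZMod n) = i - 1 := by
        rw [← he]; ring
      exact this
    · rw [dif_neg h]
  nilpotent := by
    refine ⟨ℓ, ?_⟩
    apply LinearMap.ext
    intro x
    funext r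
    rw [shiftL_pow]
    rw [dif_neg (by omega)]
    rfl

noncomputable def VsubEquiv (P : Fin ℓ → Prop) [DecidablePred P] :
    (Vsub k ℓ P) ≃ₗ[k] ({r : Fin ℓ // P r} → k) where
  toFun x := fun s => x.1 s.1
  map_add' x y := rfl
  map_smul' c x := rfl
  invFun y := ⟨fun r => if h : P r then y ⟨r, h⟩ else 0, fun r hr => dif_neg hr⟩
  left_inv x := by
    apply Subtype.ext; funext r
    by_cases h : P r
    · simp [h]
    · simp only [dif_neg h]
      exact (x.2 r h).symm
  right_inv y := by funext s; simp [s.2]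

lemma finrank_Vsub (P : Fin ℓ → Prop) [DecidablePred P] :
    Module.finrank k (Vsub k ℓ P) = Fintype.card {r : Fin ℓ // P r} := by
  rw [(VsubEquiv k ℓ P).finrank_eq, Module.finrank_pi]

lemma card_subtype_eq {n : ℕ} [NeZero n] (b : ZMod n) (i : ZMod n) {j : ℕ} (hj : j ≤ ℓ) :
    (Fintype.card {r : Fin ℓ // b + ((r : ℕ) : ZMod n) = i ∧ (r : ℕ) < j} : ℤ) = ccl n b j i := by
  classical
  have e : {r : Fin ℓ // b + ((r : ℕ) : ZMod n) = i ∧ (r : ℕ) < j} ≃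
      {s : Fin j // b + ((s : ℕ) : ZMod n) = i} :=
    { toFun := fun r => ⟨⟨(r : Fin ℓ), r.2.2⟩, r.2.1⟩
      invFun := fun s => ⟨⟨(s : Fin j), lt_of_lt_of_le s.1.2 hj⟩, ⟨s.2, s.1.2⟩⟩
      left_inv := fun r => by apply Subtype.ext; apply Fin.ext; rfl
      right_inv := fun s => by apply Subtype.ext; apply Fin.ext; rfl }
  rw [Fintype.card_congr e, Fintype.card_subtype, Finset.card_filter, ccl]
  rw [Fin.sum_univ_eq_sum_range (fun s : ℕ => if ((b + (s : ZMod n)) = i) then (1:ℕ) else 0) j]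
  push_cast [apply_ite (fun x : ℕ => (x : ℤ))]
  rfl

lemma Mrep_dim {n : ℕ} [NeZero n] (b : ZMod n) (hl : 0 < ℓ) :
    (Mrep k ℓ b hl).dim = ccl n b ℓ := by
  classical
  funext i
  show (Module.finrank k (Vsub k ℓ fun r => b + ((r : ℕ) : ZMod n) = i) : ℤ) = _
  rw [finrank_Vsub]
  have e : {r : Fin ℓ // b + ((r : ℕ) : ZMod n) = i} ≃
      {r : Fin ℓ // b + ((r : ℕ) : ZMod n) = i ∧ (r : ℕ) < ℓ} :=
    Equiv.subtypeEquivRight (fun r => ⟨fun h => ⟨h, r.2⟩, And.left⟩)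
  rw [Fintype.card_congr e]
  exact card_subtype_eq (ℓ := ℓ) b i (le_refl ℓ)

def Urep (j : ℕ) : Submodule k (Fin ℓ → k) := Vsub k ℓ (fun r => (r : ℕ) < j)

lemma Urep_shift_stable (j : ℕ) : (Urep k ℓ j).map (shiftL k ℓ) ≤ Urep k ℓ j := by
  intro y hy
  obtain ⟨x, hx, rfl⟩ := hy
  intro r hr
  rw [shiftL_apply]
  by_cases h : (r : ℕ) + 1 < ℓ
  · rw [dif_pos h]
    exact hx _ (by simp only [not_lt] at hr ⊢; omega)
  · rw [dif_neg h]

lemma Urep_isSubRep {n : ℕ} [NeZero n] (b : ZMod n) (hl : 0 < ℓ) (j : ℕ) :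
    (Mrep k ℓ b hl).IsSubRep (Urep k ℓ j) := by
  constructor
  · exact Urep_shift_stable k ℓ j
  · apply le_antisymm
    · exact iSup_le fun i => inf_le_right
    · intro x hx
      change x ∈ ⨆ i : ZMod n, (Vsub k ℓ (fun r => b + ((r : ℕ) : ZMod n) = i) ⊓ Urep k ℓ j)
      apply sum_single_mem
      intro r
      by_cases h : (r : ℕ) < j
      · exact Submodule.mem_iSup_of_mem (b + ((r : ℕ) : ZMod n))
          (Submodule.mem_inf.mpr
            ⟨single_mem_Vsub k ℓ (P := fun r' => b + ((r' : ℕ) : ZMod n) = b + ((r : ℕ) : ZMod n)) rfl (x r),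
             single_mem_Vsub k ℓ (P := fun r' => (r' : ℕ) < j) h (x r)⟩)
      · rw [hx r h, Pi.single_zero]
        exact Submodule.zero_mem _

lemma Urep_subDim {n : ℕ} [NeZero n] (b : ZMod n) (hl : 0 < ℓ) {j : ℕ} (hj : j ≤ ℓ) :
    (Mrep k ℓ b hl).subDim (Urep k ℓ j) = ccl n b j := by
  classical
  funext i
  show (Module.finrank k ↥(Vsub k ℓ (fun r => b + ((r : ℕ) : ZMod n) = i) ⊓ Vsub k ℓ (fun r => (r : ℕ) < j)) : ℤ) = _
  rw [Vsub_inf, finrank_Vsub]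
  exact card_subtype_eq (ℓ := ℓ) b i hj

lemma Urep_ne_bot (hl : 0 < ℓ) {j : ℕ} (hj : 1 ≤ j) : Urep k ℓ j ≠ ⊥ :=
  Vsub_ne_bot k ℓ ⟨0, hl⟩ (by show 0 < j; omega)

lemma Vsub_lt_top {j : ℕ} (hj : j < ℓ) : Urep k ℓ j ≠ ⊤ := by
  intro h
  have : (Pi.single ⟨j, hj⟩ (1:k) : Fin ℓ → k) ∈ Urep k ℓ j := h ▸ Submodule.mem_top
  have h0 := this ⟨j, hj⟩ (by simp)
  rw [Pi.single_eq_same] at h0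
  exact one_ne_zero h0

lemma Urep_top : Urep k ℓ ℓ = ⊤ := by
  rw [eq_top_iff]
  intro x _ r hr
  exact absurd r.2 hr

lemma subrep_classify (U : Submodule k (Fin ℓ → k))
    (hmap : U.map (shiftL k ℓ) ≤ U) (hne : U ≠ ⊥) :
    ∃ j, 1 ≤ j ∧ j ≤ ℓ ∧ U = Urep k ℓ j := by
  classical
  have hshift : ∀ x ∈ U, ∀ N, (shiftL k ℓ ^ N) x ∈ U := by
    intro x hx N
    induction N with
    | zero => simpa using hx
    | succ N ih =>
      rw [pow_succ', Module.End.mul_apply]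
      exact hmap ⟨_, ih, rfl⟩
  set T := {m : ℕ | ∃ x ∈ U, ∃ h : m < ℓ, x ⟨m, h⟩ ≠ 0} with hT
  have hTne : T.Nonempty := by
    obtain ⟨x, hxU, hx0⟩ := Submodule.exists_mem_ne_zero_of_ne_bot hne
    obtain ⟨r, hr⟩ := Function.ne_iff.mp hx0
    exact ⟨(r : ℕ), ⟨x, hxU, r.2, by simpa using hr⟩⟩
  have hbdd : BddAbove T := ⟨ℓ, fun m hm => by obtain ⟨x, _, h, _⟩ := hm; omega⟩
  set p := sSup T with hp
  obtain ⟨x, hxU, hpl, hxp⟩ : p ∈ T := Nat.sSup_mem hTne hbdd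
  have hmaxT : ∀ m ∈ T, m ≤ p := fun m hm => le_csSup hbdd hm
  have hvanish : ∀ y ∈ U, ∀ r : Fin ℓ, p < (r : ℕ) → y r = 0 := by
    intro y hy r hpr
    by_contra h0
    have : (r : ℕ) ∈ T := ⟨y, hy, r.2, by simpa using h0⟩
    exact absurd (hmaxT _ this) (by omega)
  refine ⟨p + 1, by omega, by omega, le_antisymm ?_ ?_⟩
  · intro y hy r hr
    exact hvanish y hy r (by simp only [not_lt] at hr; omega)
  · have hympos : ∀ (m : ℕ) (hm : m ≤ p) (hml : m < ℓ),
        (shiftL k ℓ ^ (p - m)) x ⟨m, hml⟩ = x ⟨p, hpl⟩ := by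
      intro m hm hml
      rw [shiftL_pow, dif_pos (by simp; omega)]
      congr 1
      apply Fin.ext
      simp
      omega
    have hymzero : ∀ (m : ℕ), ∀ r : Fin ℓ, m < (r : ℕ) →
        (shiftL k ℓ ^ (p - m)) x r = 0 := by
      intro m r hmr
      rw [shiftL_pow]
      by_cases h : (r : ℕ) + (p - m) < ℓ
      · rw [dif_pos h]
        rcases Nat.lt_or_ge p ((r:ℕ) + (p - m)) with hgt | hle
        · exact hvanish x hxU _ (by simpa using hgt)
        · -- then p - m ≤ p - r < p - m since r > m... in fact r + (p-m) ≤ p → r ≤ m contra, unless p < m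
          exfalso; omega
      · rw [dif_neg h]
    have claim : ∀ m, m ≤ p + 1 → ∀ z : Fin ℓ → k,
        (∀ r : Fin ℓ, ¬((r : ℕ) < m) → z r = 0) → z ∈ U := by
      intro m
      induction m with
      | zero =>
        intro _ z hz
        have : z = 0 := funext fun r => hz r (by omega)
        rw [this]; exact U.zero_mem
      | succ m ih =>
        intro hm z hz
        have hm' : m ≤ p := by omega
        have hml : m < ℓ := by omega
        set c := z ⟨m, hml⟩ / (x ⟨p, hpl⟩) with hc
        set w := z - c • (shiftL k ℓ ^ (p - m)) x with hwdef
        have hw_supp : ∀ r : Fin ℓ, ¬((r : ℕ) < m) → w r = 0 := by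
          intro r hr
          rcases Nat.lt_or_ge m (r : ℕ) with h | h
          · have hz0 : z r = 0 := hz r (by omega)
            have hy0 := hymzero m r h
            simp [hwdef, hz0, hy0]
          · have hrm : (r : ℕ) = m := by omega
            have hre : r = ⟨m, hml⟩ := Fin.ext hrm
            subst hre
            have hyval := hympos m hm' hml
            show z _ - c * ((shiftL k ℓ ^ (p - m)) x) _ = 0
            rw [hyval, hc]
            rw [div_mul_cancel₀]
            · ring
            · exact hxp
        have hwU : w ∈ U := ih (by omega) w hw_supp
        have hzw : z = w + c • (shiftL k ℓ ^ (p - m)) x := by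
          rw [hwdef]; abel
        rw [hzw]
        exact U.add_mem hwU (U.smul_mem c (hshift x hxU _))
    intro z hz
    exact claim (p + 1) (le_refl _) z hz

end Mod
end AuxProof

/-- `𝒯ₙ` admits no completely discrete stability function: for every stability function
`Z` there is a phase `μ` such that the subcategory `𝒜_μ` of semistable objects of phase
`μ` is nonzero and not semisimple, i.e. some semistable object of phase `μ` has a
nonzero proper subrepresentation of phase `μ` admitting no subrepresentation
complement. -/
theorem stmt_9 (k : Type) [Field k] (n : ℕ) [NeZero n]
    (Z : (ZMod n → ℤ) → ℂ) (hZ : IsStabilityFunction n Z) :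
    ∃ μ : ℝ,
      (∃ M : NilpRep k n, IsSemistable Z M ∧ (Z M.dim).arg = μ) ∧
      (∃ (M : NilpRep k n) (U : Submodule k M.carrier),
        IsSemistable Z M ∧ (Z M.dim).arg = μ ∧
        M.IsSubRep U ∧ U ≠ ⊥ ∧ U ≠ ⊤ ∧ (Z (M.subDim U)).arg = μ ∧
        ¬ ∃ U' : Submodule k M.carrier,
            M.IsSubRep U' ∧ U ⊓ U' = ⊥ ∧ U ⊔ U' = ⊤) := by
  classical
  obtain ⟨b, j, ℓ, hj1, hjl, heq, hsemi⟩ := core Z hZ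
  have hl : 0 < ℓ := by omega
  have hjle : j ≤ ℓ := le_of_lt hjl
  set M := Mrep k ℓ b hl with hM
  have hMdim : M.dim = ccl n b ℓ := Mrep_dim k ℓ b hl
  have hsemiM : IsSemistable Z M := by
    constructor
    · rw [hMdim]; exact ccl_ne_zero b (by omega)
    · intro U hU hUb hUt
      obtain ⟨j', hj'1, hj'le, rfl⟩ := subrep_classify k ℓ U hU.1 hUb
      have hj'lt : j' < ℓ := lt_of_le_of_ne hj'le (fun he => hUt (by rw [he]; exact Urep_top k ℓ))
      rw [show M.subDim (Urep k ℓ j') = ccl n b j' from Urep_subDim k ℓ b hl hj'le, hMdim]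
      exact hsemi j' hj'1 hj'lt
  refine ⟨(Z M.dim).arg, ⟨M, hsemiM, rfl⟩, M, Urep k ℓ j, hsemiM, rfl,
    Urep_isSubRep k ℓ b hl j, Urep_ne_bot k ℓ hl hj1, Vsub_lt_top k ℓ hjl, ?_, ?_⟩
  · rw [show M.subDim (Urep k ℓ j) = ccl n b j from Urep_subDim k ℓ b hl hjle, hMdim]
    exact heq
  · rintro ⟨U', hU', hinf, hsup⟩
    by_cases hU'b : U' = ⊥
    · rw [hU'b] at hsup; erw [sup_bot_eq] at hsup
      exact Vsub_lt_top k ℓ hjl hsup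
    · obtain ⟨j', hj'1, _, rfl⟩ := subrep_classify k ℓ U' hU'.1 hU'b
      have hmem : (Pi.single ⟨0, hl⟩ (1:k) : Fin ℓ → k) ∈ Urep k ℓ j ⊓ Urep k ℓ j' :=
        Submodule.mem_inf.mpr
          ⟨single_mem_Vsub k ℓ (P := fun r => (r : ℕ) < j) (by show 0 < j; omega) 1,
           single_mem_Vsub k ℓ (P := fun r => (r : ℕ) < j') (by show 0 < j'; omega) 1⟩
      erw [hinf, Submodule.mem_bot] at hmem
      have h0 := congrFun hmem ⟨0, hl⟩
      rw [Pi.single_eq_same] at h0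
      exact one_ne_zero h0
end

section
/- Let 𝕋 be the quantum torus over ℚ(q^{1/2}) with generators y₁, y₂ satisfying y₁y₂ = q y₂y₁ (completed with respect to total degree). Then the quantum dilogarithm satisfies the pentagon identity: 𝔼(y₁)𝔼(y₂) = 𝔼(y₂)𝔼(q^{−1/2} y₁y₂)𝔼(y₁). -/
noncomputable section

/-- The base field `ℚ(q^{1/2})`, realised as rational functions in `X = q^{1/2}`. -/
abbrev QTField : Type := RatFunc ℚ

/-- `q^{1/2}`. -/
def sqrtq : QTField := RatFunc.X

/-- The completed quantum torus on two generators `y₁, y₂` with `y₁y₂ = q y₂y₁`: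
formal series `Σ c_{a,b} y₁^a y₂^b`, encoded by coefficient functions on `ℕ × ℕ`. -/
def QT2 : Type := ℕ × ℕ → QTField

/-- Multiplication in the completed quantum torus: with the normally ordered basis
`y^{(a,b)} = y₁^a y₂^b` and `y₂ y₁ = q⁻¹ y₁ y₂`, one has
`y^{(a,b)} · y^{(c,d)} = q^{−bc} y^{(a+c, b+d)}`. -/
def qt2mul (f g : QT2) : QT2 := fun p =>
  ∑ x ∈ Finset.range (p.1 + 1), ∑ y ∈ Finset.range (p.2 + 1),
    f (x, y) * g (p.1 - x, p.2 - y) * sqrtq ^ (-(2 * (y * (p.1 - x)) : ℤ))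

/-- The coefficients of the quantum dilogarithm: `c m = q^{m²/2} / ∏_{k=1}^m (qᵐ − q^{m−k})`. -/
def qdlogCoeff (m : ℕ) : QTField :=
  sqrtq ^ (m ^ 2) / ∏ j ∈ Finset.range m, (sqrtq ^ (2 * m) - sqrtq ^ (2 * j))

/-- `𝔼(y₁) = Σ_m c_m y₁^m`. -/
def E₁ : QT2 := fun p => if p.2 = 0 then qdlogCoeff p.1 else 0

/-- `𝔼(y₂) = Σ_m c_m y₂^m`. -/
def E₂ : QT2 := fun p => if p.1 = 0 then qdlogCoeff p.2 else 0

/-- `𝔼(q^{−1/2} y₁ y₂) = Σ_m c_m (q^{−1/2} y₁y₂)^m = Σ_m c_m q^{−m²/2} y₁^m y₂^m`,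
using `(q^{−1/2} y₁ y₂)^m = q^{−m²/2} y₁^m y₂^m`. -/
def E₁₂ : QT2 := fun p =>
  if p.1 = p.2 then qdlogCoeff p.1 * sqrtq ^ (-(p.1 ^ 2 : ℤ)) else 0

/-! ### Auxiliary definitions and lemmas -/

lemma sqrtq_ne_zero : sqrtq ≠ 0 := RatFunc.X_ne_zero

lemma sqrtq_pow_sub_one_ne_zero {n : ℕ} (hn : n ≠ 0) : sqrtq ^ n - 1 ≠ 0 := by
  have : sqrtq ^ n - 1 = algebraMap (Polynomial ℚ) (RatFunc ℚ) (Polynomial.X ^ n - 1) := by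
    simp [sqrtq, ← RatFunc.algebraMap_X, map_sub, map_pow]
  rw [this]
  intro h
  have h2 : (Polynomial.X ^ n - 1 : Polynomial ℚ) = 0 :=
    RatFunc.algebraMap_injective ℚ (by simpa using h)
  have := congrArg (Polynomial.eval 0) h2
  simp [Polynomial.eval_pow, zero_pow hn] at this

/-- `dd m = ∏_{k=1}^m (q^k − 1)` (with `q = sqrtq²`). -/
def dd (m : ℕ) : QTField := ∏ k ∈ Finset.range m, (sqrtq ^ (2*(k+1)) - 1)

/-- `ee a x = ∏_{j=0}^{x-1} (q^{a−j} − 1)`, the falling factorial `dd a / dd (a−x)`. -/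
def ee (a x : ℕ) : QTField := ∏ j ∈ Finset.range x, (sqrtq ^ (2*(a-j)) - 1)

lemma dd_ne_zero (m : ℕ) : dd m ≠ 0 := by
  apply Finset.prod_ne_zero_iff.2
  intro k _
  exact sqrtq_pow_sub_one_ne_zero (by positivity)

lemma ee_ne_zero {a x : ℕ} (h : x ≤ a) : ee a x ≠ 0 := by
  rw [ee]
  apply Finset.prod_ne_zero_iff.2
  intro j hj
  have := Finset.mem_range.1 hj
  exact sqrtq_pow_sub_one_ne_zero (by omega)

lemma prod_eq (m : ℕ) :
    ∏ j ∈ Finset.range m, (sqrtq ^ (2 * m) - sqrtq ^ (2 * j)) = sqrtq ^ (m*(m-1)) * dd m := by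
  have h1 : ∀ j ∈ Finset.range m, sqrtq ^ (2*m) - sqrtq ^ (2*j)
      = sqrtq ^ (2*j) * (sqrtq ^ (2*(m-j)) - 1) := by
    intro j hj
    have hj' : j ≤ m := le_of_lt (Finset.mem_range.1 hj)
    rw [mul_sub, mul_one, ← pow_add]
    congr 2
    omega
  rw [Finset.prod_congr rfl h1, Finset.prod_mul_distrib, Finset.prod_pow_eq_pow_sum]
  congr 1
  · rw [← Finset.mul_sum, mul_comm 2, Finset.sum_range_id_mul_two m]
  · rw [← Finset.prod_range_reflect]
    apply Finset.prod_congr rfl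
    intro j hj
    have h : 2*(m - (m - 1 - j)) = 2*(j+1) := by
      have := Finset.mem_range.1 hj; omega
    rw [h]

lemma qdlogCoeff_eq (m : ℕ) : qdlogCoeff m = sqrtq ^ m / dd m := by
  rw [qdlogCoeff, prod_eq]
  have hm : m ^ 2 = m*(m-1) + m := by
    cases m with
    | zero => rfl
    | succ k => simp only [Nat.add_sub_cancel]; ring
  rw [hm, pow_add, mul_comm (sqrtq ^ (m*(m-1))) (sqrtq ^ m),
    mul_comm (sqrtq ^ (m*(m-1))) (dd m)]
  exact mul_div_mul_right _ _ (pow_ne_zero _ sqrtq_ne_zero)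

lemma ee_zero {a x : ℕ} (h : a < x) : ee a x = 0 := by
  apply Finset.prod_eq_zero (Finset.mem_range.2 h)
  simp

lemma dd_succ (y : ℕ) : dd (y+1) = dd y * (sqrtq ^ (2*(y+1)) - 1) := Finset.prod_range_succ _ _

lemma ee_succ (a y : ℕ) : ee a (y+1) = ee a y * (sqrtq ^ (2*(a-y)) - 1) := Finset.prod_range_succ _ _

lemma ee_succ_left (a y : ℕ) : ee (a+1) (y+1) = (sqrtq ^ (2*(a+1)) - 1) * ee a y := by
  rw [ee, Finset.prod_range_succ']
  simp only [Nat.succ_sub_succ_eq_sub, Nat.sub_zero]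
  rw [mul_comm]; rfl

lemma dd_factor {x a : ℕ} (h : x ≤ a) : dd a = dd (a-x) * ee a x := by
  obtain ⟨c, rfl⟩ : ∃ c, a = c + x := ⟨a - x, by omega⟩
  have hc : c + x - x = c := by omega
  rw [hc, dd, Finset.prod_range_add, ee,
    ← Finset.prod_range_reflect (fun j => (sqrtq ^ (2*(c+x-j)) - 1)) x]
  congr 1
  apply Finset.prod_congr rfl
  intro j hj
  have hj' := Finset.mem_range.1 hj
  congr 2
  omega

/-- Key recurrence for `ee` in the first argument. -/
lemma ee_rec (a x : ℕ) :
    ee (a+1) x = sqrtq ^ (2*x) * ee a x + (sqrtq ^ (2*x) - 1) * ee a (x-1) := by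
  cases x with
  | zero => simp [ee]
  | succ y =>
    simp only [Nat.add_sub_cancel]
    rw [ee_succ_left, ee_succ]
    by_cases hy : y ≤ a
    · have key : (sqrtq ^ (2*(a+1)) - 1)
          = sqrtq ^ (2*(y+1)) * (sqrtq ^ (2*(a-y)) - 1) + (sqrtq ^ (2*(y+1)) - 1) := by
        rw [mul_sub, mul_one, ← pow_add]
        have : 2*(y+1) + 2*(a-y) = 2*(a+1) := by omega
        rw [this]; ring
      rw [key]; ring
    · have h1 : ee a y = 0 := ee_zero (by omega)
      rw [h1]
      ring

/-- The key `q`-identity (a form of the `q`-Vandermonde identity):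
`q^{ab} = Σ_x q^{x(x-1)/2} [a;x][b;x] (q;q)_x`. -/
lemma key (a b : ℕ) :
    ∑ x ∈ Finset.range (a+1), sqrtq ^ (x*(x-1)) * ee a x * ee b x / dd x
      = sqrtq ^ (2*(a*b)) := by
  induction a with
  | zero => simp [ee, dd]
  | succ a ih =>
    have hsplit : ∀ x : ℕ, sqrtq ^ (x*(x-1)) * ee (a+1) x * ee b x / dd x
        = sqrtq ^ (2*x) * (sqrtq ^ (x*(x-1)) * ee a x * ee b x / dd x)
          + sqrtq ^ (x*(x-1)) * ((sqrtq ^ (2*x) - 1) * ee a (x-1)) * ee b x / dd x := by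
      intro x; rw [ee_rec]; ring
    simp only [hsplit]
    rw [Finset.sum_add_distrib]
    rw [Finset.sum_range_succ (fun x => sqrtq ^ (2*x) * (sqrtq ^ (x*(x-1)) * ee a x * ee b x / dd x))]
    have h0 : ee a (a+1) = 0 := ee_zero (by omega)
    simp only [h0, mul_zero, zero_mul, zero_div, add_zero]
    rw [Finset.sum_range_succ' (fun x => sqrtq ^ (x*(x-1)) * ((sqrtq ^ (2*x) - 1) * ee a (x-1)) * ee b x / dd x)]
    norm_num
    rw [← Finset.sum_add_distrib]
    have halg : ∀ (A R E F C Q d : QTField), C ≠ 0 → d ≠ 0 →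
        A * (R * E * F / d) + A * R * (C * E) * (F * (Q - 1)) / (d * C)
          = A * Q * (R * E * F / d) := by
      intro A R E F C Q d hC hd
      field_simp
      ring
    have hterm : ∀ x ∈ Finset.range (a+1),
        sqrtq ^ (2*x) * (sqrtq ^ (x*(x-1)) * ee a x * ee b x / dd x)
          + sqrtq ^ ((x+1)*x) * ((sqrtq ^ (2*(x+1)) - 1) * ee a x) * ee b (x+1) / dd (x+1)
        = sqrtq ^ (2*b) * (sqrtq ^ (x*(x-1)) * ee a x * ee b x / dd x) := by
      intro x hx
      rw [ee_succ b x, dd_succ x]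
      by_cases hb : x ≤ b
      · have hpow : sqrtq ^ ((x+1)*x) = sqrtq ^ (2*x) * sqrtq ^ (x*(x-1)) := by
          rw [← pow_add]; congr 1
          cases x with
          | zero => rfl
          | succ y => simp only [Nat.add_sub_cancel]; ring
        have hb2 : sqrtq ^ (2*b) = sqrtq ^ (2*x) * sqrtq ^ (2*(b-x)) := by
          rw [← pow_add]; congr 1; omega
        have hC : sqrtq ^ (2*(x+1)) - 1 ≠ 0 := sqrtq_pow_sub_one_ne_zero (by omega)
        rw [hpow, hb2]
        exact halg _ _ _ _ _ _ _ hC (dd_ne_zero x)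
      · have h1 : ee b x = 0 := ee_zero (by omega)
        have h2 : b - x = 0 := by omega
        simp [h1, h2]
    rw [Finset.sum_congr rfl hterm, ← Finset.mul_sum, ih, ← pow_add]
    congr 1
    ring

lemma mul_E1_E2 (a b : ℕ) : qt2mul E₁ E₂ (a, b) = qdlogCoeff a * qdlogCoeff b := by
  unfold qt2mul
  rw [Finset.sum_eq_single a]
  · rw [Finset.sum_eq_single 0]
    · simp [E₁, E₂]
    · intro y _ hy0
      simp [E₁, hy0]
    · intro h
      exact absurd (Finset.mem_range.2 (by omega)) h
  · intro x hx hxa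
    apply Finset.sum_eq_zero
    intro y _
    have hne : ¬ (a - x = 0) := by have := Finset.mem_range.1 hx; omega
    simp [E₂, hne]
  · intro h
    exact absurd (Finset.mem_range.2 (by omega)) h

lemma G_eq (x y : ℕ) : qt2mul E₂ E₁₂ (x, y)
    = if x ≤ y then
        qdlogCoeff (y-x) * (qdlogCoeff x * sqrtq ^ (-(x^2 : ℤ)))
          * sqrtq ^ (-(2 * ((y-x) * x)) : ℤ)
      else 0 := by
  unfold qt2mul
  by_cases h : x ≤ y
  · rw [if_pos h]
    rw [Finset.sum_eq_single 0]
    · rw [Finset.sum_eq_single (y - x)]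
      · have h1 : y - (y - x) = x := by omega
        simp only [Nat.sub_zero, h1, E₂, E₁₂, if_pos rfl]
        norm_num
        left
        congr 1
        push_cast [Nat.cast_sub h]
        ring
      · intro v hv hvne
        have hne : ¬ (x = y - v) := by
          have := Finset.mem_range.1 hv; omega
        simp [E₁₂, hne]
      · intro hmem
        exact absurd (Finset.mem_range.2 (by omega)) hmem
    · intro u hu hune
      apply Finset.sum_eq_zero
      intro v _
      simp [E₂, hune]
    · intro hmem
      exact absurd (Finset.mem_range.2 (by omega)) hmem
  · rw [if_neg h]
    apply Finset.sum_eq_zero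
    intro u _
    apply Finset.sum_eq_zero
    intro v hv
    by_cases hu : u = 0
    · have hne : ¬ (x - u = y - v) := by
        have := Finset.mem_range.1 hv; omega
      simp [E₁₂, hne]
    · simp [E₂, hu]

lemma halg2 (r dv dx du ea eb : QTField) (x u v : ℕ)
    (hs : r ≠ 0) (hdv : dv ≠ 0) (hdx : dx ≠ 0) (hdu : du ≠ 0) (hea : ea ≠ 0) (heb : eb ≠ 0) :
    r ^ v / dv * (r ^ x / dx * (r ^ x ^ 2)⁻¹) * (r ^ (2 * (v * x)))⁻¹ * (r ^ u / du) *
        (r ^ (2 * ((x + v) * u)))⁻¹ =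
      r ^ (x + u + (x + v)) / (du * ea * (dv * eb) * r ^ (2 * ((x + u) * (x + v)))) *
        (r ^ x ^ 2 / r ^ x * ea * eb / dx) := by
  rw [show r ^ v / dv * (r ^ x / dx * (r ^ x ^ 2)⁻¹) * (r ^ (2 * (v * x)))⁻¹ * (r ^ u / du) *
      (r ^ (2 * ((x + v) * u)))⁻¹
    = (r ^ v * r ^ x * r ^ u) /
        (dv * dx * du * r ^ x ^ 2 * r ^ (2 * (v * x)) * r ^ (2 * ((x + v) * u))) from by ring,
    show r ^ (x + u + (x + v)) / (du * ea * (dv * eb) * r ^ (2 * ((x + u) * (x + v)))) *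
      (r ^ x ^ 2 / r ^ x * ea * eb / dx)
    = (r ^ (x + u + (x + v)) * r ^ x ^ 2 * ea * eb) /
        (du * ea * dv * eb * r ^ (2 * ((x + u) * (x + v))) * r ^ x * dx) from by ring,
    div_eq_div_iff
      (by exact mul_ne_zero (mul_ne_zero (mul_ne_zero (mul_ne_zero (mul_ne_zero hdv hdx) hdu)
        (pow_ne_zero _ hs)) (pow_ne_zero _ hs)) (pow_ne_zero _ hs))
      (by exact mul_ne_zero (mul_ne_zero (mul_ne_zero (mul_ne_zero (mul_ne_zero (mul_ne_zero hdu hea)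
        hdv) heb) (pow_ne_zero _ hs)) (pow_ne_zero _ hs)) hdx)]
  ring

/-- The pentagon identity for the quantum dilogarithm in the completed quantum torus
with `y₁y₂ = q y₂y₁`:  `𝔼(y₁) 𝔼(y₂) = 𝔼(y₂) 𝔼(q^{−1/2} y₁y₂) 𝔼(y₁)`. -/
theorem stmt_16 : qt2mul E₁ E₂ = qt2mul (qt2mul E₂ E₁₂) E₁ := by
  funext p
  obtain ⟨a, b⟩ := p
  rw [mul_E1_E2 a b]
  show _ = ∑ x ∈ Finset.range (a+1), ∑ y ∈ Finset.range (b+1),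
      qt2mul E₂ E₁₂ (x, y) * E₁ (a - x, b - y) * sqrtq ^ (-(2 * (y * (a - x)) : ℤ))
  have hinner : ∀ x ∈ Finset.range (a+1),
      (∑ y ∈ Finset.range (b+1),
        qt2mul E₂ E₁₂ (x, y) * E₁ (a - x, b - y) * sqrtq ^ (-(2 * (y * (a - x)) : ℤ)))
      = qt2mul E₂ E₁₂ (x, b) * qdlogCoeff (a-x) * sqrtq ^ (-(2 * (b * (a - x)) : ℤ)) := by
    intro x _
    rw [Finset.sum_eq_single b]
    · simp [E₁]
    · intro y hy hyb
      have hne : ¬ (b - y = 0) := by have := Finset.mem_range.1 hy; omega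
      simp [E₁, hne]
    · intro hmem
      exact absurd (Finset.mem_range.2 (by omega)) hmem
  rw [Finset.sum_congr rfl hinner]
  have hterm : ∀ x ∈ Finset.range (a+1),
      qt2mul E₂ E₁₂ (x, b) * qdlogCoeff (a-x) * sqrtq ^ (-(2 * (b * (a - x)) : ℤ))
      = (sqrtq ^ (a+b) / (dd a * dd b * sqrtq ^ (2*(a*b))))
          * (sqrtq ^ (x*(x-1)) * ee a x * ee b x / dd x) := by
    intro x hx
    have hxa : x ≤ a := by have := Finset.mem_range.1 hx; omega
    rw [G_eq]
    by_cases hxb : x ≤ b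
    · rw [if_pos hxb, qdlogCoeff_eq, qdlogCoeff_eq, qdlogCoeff_eq,
        dd_factor hxa, dd_factor hxb]
      have hea : ee a x ≠ 0 := ee_ne_zero hxa
      have heb : ee b x ≠ 0 := ee_ne_zero hxb
      have hda := dd_ne_zero (a-x)
      have hdb := dd_ne_zero (b-x)
      have hdx := dd_ne_zero x
      have hs := sqrtq_ne_zero
      obtain ⟨u, rfl⟩ : ∃ u, a = x + u := ⟨a - x, by omega⟩
      obtain ⟨v, rfl⟩ : ∃ v, b = x + v := ⟨b - x, by omega⟩
      simp only [Nat.add_sub_cancel_left] at *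
      have hxx : sqrtq ^ (x*(x-1)) = sqrtq ^ (x^2) / sqrtq ^ x := by
        rw [eq_div_iff (pow_ne_zero _ hs), ← pow_add]
        congr 1
        cases x with
        | zero => rfl
        | succ y => simp only [Nat.add_sub_cancel]; ring
      rw [hxx]
      simp only [zpow_neg]
      norm_cast
      simp only [Nat.add_sub_cancel_left]
      exact halg2 sqrtq (dd v) (dd x) (dd u) (ee (x+u) x) (ee (x+v) x) x u v
        hs hdb hdx hda hea heb
    · rw [if_neg hxb]
      have h0 : ee b x = 0 := ee_zero (by omega)
      simp [h0]
  rw [Finset.sum_congr rfl hterm, ← Finset.mul_sum, key,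
    qdlogCoeff_eq, qdlogCoeff_eq]
  have hda := dd_ne_zero a
  have hdb := dd_ne_zero b
  have hs := sqrtq_ne_zero
  field_simp
  ring

end
end
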